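/- arXiv:math/0611849 — 5 statements merged into one kernel-verified Lean document; each statement's English description precedes it below -/
import Mathlib

section
/- Let s₁, s₂ be complex numbers with Re(s₁) > 1 and Re(s₂) > 1. Then ∫∫_{{(x,y) : x and y integral, |x|_f > |y|_f}} |x|_f^{s₁} |y|_f^{s₂} dμ(x) dμ(y) = ζ(s₁,s₂), where ζ(s₁,s₂) = ∑_{0 < n₁ < n₂} n₁^{-s₁} n₂^{-s₂} is the double zeta function. -/
open MeasureTheory

noncomputable section

instance (p : Nat.Primes) : Fact (p : ℕ).Prime := ⟨p.2⟩

/-- The group in which finite ideles live: tuples of nonzero `p`-adic numbers. -/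
abbrev IdeleComponents : Type := ∀ p : Nat.Primes, ℚ_[(p : ℕ)]ˣ

/-- The group of finite ideles of `ℚ`: tuples of nonzero `p`-adic numbers which are
`p`-adic units for all but finitely many `p` (the unit group of the restricted
product of the `ℚ_p` with respect to the `ℤ_p`). -/
def FiniteIdeles : Subgroup IdeleComponents where
  carrier := {x | {p : Nat.Primes | ‖((x p : ℚ_[(p : ℕ)]))‖ ≠ 1}.Finite}
  one_mem' := by
    simp
  mul_mem' := by
    intro x y hx hy
    refine (hx.union hy).subset ?_
    intro p hp
    by_contra h
    simp only [Set.mem_union, Set.mem_setOf_eq, not_or, not_not] at h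
    apply hp
    simp [Pi.mul_apply, Units.val_mul, norm_mul, h.1, h.2]
  inv_mem' := by
    intro x hx
    refine hx.subset ?_
    intro p hp
    simp only [Set.mem_setOf_eq, Pi.inv_apply] at hp ⊢
    rw [Units.val_inv_eq_inv_val, norm_inv] at hp
    intro h
    rw [h] at hp
    simp at hp

/-- The idele norm of a finite idele: the product `∏_p |x_p|_p` over all primes
(all but finitely many factors equal `1`). -/
def fnorm (x : FiniteIdeles) : ℝ :=
  ∏ᶠ p : Nat.Primes, ‖((x : IdeleComponents) p : ℚ_[(p : ℕ)])‖

/-- A finite idele is integral if all of its components are `p`-adic integers. -/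
def IsIntegralIdele (x : FiniteIdeles) : Prop :=
  ∀ p : Nat.Primes, ‖((x : IdeleComponents) p : ℚ_[(p : ℕ)])‖ ≤ 1

/-- The subset `Ẑ^×` of the finite ideles: all components are `p`-adic units. -/
def zHatUnits : Set FiniteIdeles :=
  {x | ∀ p : Nat.Primes, ‖((x : IdeleComponents) p : ℚ_[(p : ℕ)])‖ = 1}


namespace AdelicAux

lemma finiteSupp (x : FiniteIdeles) :
    (Function.mulSupport fun p : Nat.Primes =>
      ‖((x : IdeleComponents) p : ℚ_[(p : ℕ)])‖).Finite := x.2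

lemma fnorm_mul (x y : FiniteIdeles) : fnorm (x * y) = fnorm x * fnorm y := by
  have h : ∀ p : Nat.Primes, ‖(((x * y : FiniteIdeles) : IdeleComponents) p : ℚ_[(p : ℕ)])‖
      = ‖((x : IdeleComponents) p : ℚ_[(p : ℕ)])‖ * ‖((y : IdeleComponents) p : ℚ_[(p : ℕ)])‖ := by
    intro p
    show ‖(((x : IdeleComponents) p * (y : IdeleComponents) p : ℚ_[(p : ℕ)]ˣ) : ℚ_[(p : ℕ)])‖ = _
    rw [Units.val_mul, norm_mul]
  calc fnorm (x * y) = ∏ᶠ p : Nat.Primes,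
        ‖((x : IdeleComponents) p : ℚ_[(p : ℕ)])‖ * ‖((y : IdeleComponents) p : ℚ_[(p : ℕ)])‖ :=
      finprod_congr h
    _ = fnorm x * fnorm y := finprod_mul_distrib (finiteSupp x) (finiteSupp y)

lemma fnorm_of_mem_zHatUnits {u : FiniteIdeles} (hu : u ∈ zHatUnits) : fnorm u = 1 := by
  have : fnorm u = ∏ᶠ _ : Nat.Primes, (1 : ℝ) := finprod_congr hu
  rw [this, finprod_one]

lemma padicValNat_prod_pow (T : Finset Nat.Primes) (a : Nat.Primes → ℕ) (q : Nat.Primes) :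
    padicValNat q (∏ p ∈ T, (p : ℕ) ^ a p) = if q ∈ T then a q else 0 := by
  have hstep : ∀ p : Nat.Primes,
      (((p : ℕ)) ^ a p).factorization = Finsupp.single (p : ℕ) (a p) :=
    fun p => p.2.factorization_pow
  rw [← Nat.factorization_def _ q.2,
    Nat.factorization_prod (fun p _ => pow_ne_zero _ p.2.pos.ne'),
    Finset.sum_congr rfl (fun p _ => hstep p),
    Finsupp.finset_sum_apply]
  by_cases hq : q ∈ T
  · rw [if_pos hq, Finset.sum_eq_single_of_mem q hq
      (fun b _ hb => Finsupp.single_eq_of_ne' (fun h => hb (Subtype.ext h))),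
      Finsupp.single_eq_same]
  · rw [if_neg hq, Finset.sum_eq_zero]
    intro b hb
    exact Finsupp.single_eq_of_ne' (fun h => hq (Subtype.ext h ▸ hb))

lemma prod_pow_ne_zero (T : Finset Nat.Primes) (a : Nat.Primes → ℕ) :
    ∏ p ∈ T, (p : ℕ) ^ a p ≠ 0 :=
  Finset.prod_ne_zero_iff.mpr (fun p _ => pow_ne_zero _ p.2.pos.ne')

lemma cast_prod_pow_inv (T : Finset Nat.Primes) (a : Nat.Primes → ℕ) :
    ((∏ p ∈ T, (p : ℕ) ^ a p : ℕ) : ℝ)⁻¹ = ∏ p ∈ T, ((p : ℕ) : ℝ) ^ (-(a p : ℤ)) := by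
  push_cast
  rw [← Finset.prod_inv_distrib]
  refine Finset.prod_congr rfl fun p _ => ?_
  rw [zpow_neg, zpow_natCast]

lemma norm_natCast_padic (n : ℕ) (hn : n ≠ 0) (p : Nat.Primes) :
    ‖((n : ℚ_[(p : ℕ)]))‖ = ((p : ℕ) : ℝ) ^ (-(padicValNat p n : ℤ)) := by
  rw [Padic.norm_eq_zpow_neg_valuation (by exact_mod_cast Nat.cast_ne_zero.mpr hn),
    Padic.valuation_natCast]

lemma exists_rep (x : FiniteIdeles) (hx : IsIntegralIdele x) :
    ∃ n : ℕ, n ≠ 0 ∧ fnorm x = (n : ℝ)⁻¹ ∧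
      ∀ p : Nat.Primes, ‖((x : IdeleComponents) p : ℚ_[(p : ℕ)])‖ = ‖((n : ℚ_[(p : ℕ)]))‖ := by
  classical
  set a : Nat.Primes → ℕ :=
    fun p => ((x : IdeleComponents) p : ℚ_[(p : ℕ)]).valuation.toNat with ha
  have hone : ∀ p : Nat.Primes, (1 : ℝ) < ((p : ℕ) : ℝ) := by
    intro p; exact_mod_cast p.2.one_lt
  have hval : ∀ p : Nat.Primes,
      ‖((x : IdeleComponents) p : ℚ_[(p : ℕ)])‖ = ((p : ℕ) : ℝ) ^ (-(a p : ℤ)) := by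
    intro p
    have h0 : ((x : IdeleComponents) p : ℚ_[(p : ℕ)]) ≠ 0 := Units.ne_zero _
    have hv : 0 ≤ ((x : IdeleComponents) p : ℚ_[(p : ℕ)]).valuation := by
      by_contra h
      push_neg at h
      have h2 := hx p
      rw [Padic.norm_eq_zpow_neg_valuation h0,
        show (1 : ℝ) = ((p : ℕ) : ℝ) ^ (0 : ℤ) by simp] at h2
      have h3 := (zpow_le_zpow_iff_right₀ (hone p)).mp h2
      omega
    rw [Padic.norm_eq_zpow_neg_valuation h0, ha]
    congr 1
    simp [Int.toNat_of_nonneg hv]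
  set T : Finset Nat.Primes := (finiteSupp x).toFinset with hT
  have hTmem : ∀ p : Nat.Primes, p ∉ T → a p = 0 := by
    intro p hp
    have h1 : ‖((x : IdeleComponents) p : ℚ_[(p : ℕ)])‖ = 1 := by
      by_contra h
      exact hp ((finiteSupp x).mem_toFinset.mpr h)
    rw [hval p, show (1 : ℝ) = ((p : ℕ) : ℝ) ^ (0 : ℤ) by simp] at h1
    have := zpow_right_injective₀ (by linarith [hone p]) (by linarith [hone p]) h1
    omega
  refine ⟨∏ p ∈ T, (p : ℕ) ^ a p, prod_pow_ne_zero T a, ?_, ?_⟩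
  · have hsub : (Function.mulSupport fun p : Nat.Primes =>
        ‖((x : IdeleComponents) p : ℚ_[(p : ℕ)])‖) ⊆ ↑T := by
      intro p hp
      exact (finiteSupp x).mem_toFinset.mpr hp
    rw [show fnorm x = ∏ p ∈ T, ‖((x : IdeleComponents) p : ℚ_[(p : ℕ)])‖ from
      finprod_eq_prod_of_mulSupport_subset _ hsub, cast_prod_pow_inv T a]
    exact Finset.prod_congr rfl fun p _ => hval p
  · intro p
    rw [hval p, norm_natCast_padic _ (prod_pow_ne_zero T a) p, padicValNat_prod_pow T a p]
    by_cases hp : p ∈ T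
    · rw [if_pos hp]
    · rw [if_neg hp, hTmem p hp]

lemma norm_nat_inj {n m : ℕ} (hn : n ≠ 0) (hm : m ≠ 0)
    (h : ∀ p : Nat.Primes, ‖((n : ℚ_[(p : ℕ)]))‖ = ‖((m : ℚ_[(p : ℕ)]))‖) : n = m := by
  rw [Nat.eq_iff_prime_padicValNat_eq n m hn hm]
  intro q hq
  haveI : Fact q.Prime := ⟨hq⟩
  have h1 := h ⟨q, hq⟩
  rw [norm_natCast_padic n hn ⟨q, hq⟩, norm_natCast_padic m hm ⟨q, hq⟩] at h1
  have hcoe : ((⟨q, hq⟩ : Nat.Primes) : ℕ) = q := rfl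
  rw [hcoe] at h1
  have hone : (1 : ℝ) < (q : ℝ) := by exact_mod_cast hq.one_lt
  have := zpow_right_injective₀ (by linarith) (by linarith) h1
  omega

/-- The diagonal idele attached to a positive natural number. -/
def diag (n : ℕ) (hn : n ≠ 0) : FiniteIdeles :=
  ⟨fun p => Units.mk0 ((n : ℚ_[(p : ℕ)])) (Nat.cast_ne_zero.mpr hn), by
    have hsub : {p : Nat.Primes | ‖((n : ℚ_[(p : ℕ)]))‖ ≠ 1} ⊆
        (fun p : Nat.Primes => (p : ℕ)) ⁻¹' ↑n.primeFactors := by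
      intro p hp
      simp only [Set.mem_setOf_eq] at hp
      have hle : ‖((n : ℚ_[(p : ℕ)]))‖ ≤ 1 := by
        have := Padic.norm_int_le_one (p := (p : ℕ)) (n : ℤ)
        rwa [Int.cast_natCast] at this
      have hlt : ‖((n : ℚ_[(p : ℕ)]))‖ < 1 := lt_of_le_of_ne hle hp
      have hdvd : ((p : ℕ) : ℤ) ∣ (n : ℤ) := by
        rw [← Padic.norm_intCast_lt_one_iff]
        rwa [Int.cast_natCast]
      simp only [Set.mem_preimage, Finset.coe_sort_coe, Finset.mem_coe, Nat.mem_primeFactors]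
      exact ⟨p.2, by exact_mod_cast hdvd, hn⟩
    exact Set.Finite.subset
      (Set.Finite.preimage (Set.injOn_of_injective (fun a b h => Subtype.ext h))
        (Finset.finite_toSet _)) hsub⟩

lemma diag_component (n : ℕ) (hn : n ≠ 0) (p : Nat.Primes) :
    (((diag n hn : FiniteIdeles) : IdeleComponents) p : ℚ_[(p : ℕ)]) = (n : ℚ_[(p : ℕ)]) := rfl

lemma diag_integral (n : ℕ) (hn : n ≠ 0) : IsIntegralIdele (diag n hn) := by
  intro p
  rw [diag_component]
  have := Padic.norm_int_le_one (p := (p : ℕ)) (n : ℤ)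
  rwa [Int.cast_natCast] at this

lemma fnorm_diag (n : ℕ) (hn : n ≠ 0) : fnorm (diag n hn) = (n : ℝ)⁻¹ := by
  obtain ⟨m, hm0, hfm, hcomp⟩ := exists_rep (diag n hn) (diag_integral n hn)
  have : n = m := by
    refine norm_nat_inj hn hm0 fun p => ?_
    have := hcomp p
    rwa [diag_component] at this
  rw [hfm, this]

lemma mem_zHatUnits_iff (y : FiniteIdeles) :
    y ∈ zHatUnits ↔ ∀ p : Nat.Primes, ‖((y : IdeleComponents) p : ℚ_[(p : ℕ)])‖ = 1 :=
  Iff.rfl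

lemma inv_mul_component (A x : FiniteIdeles) (p : Nat.Primes) :
    (((A⁻¹ * x : FiniteIdeles) : IdeleComponents) p : ℚ_[(p : ℕ)])
      = ((A : IdeleComponents) p : ℚ_[(p : ℕ)])⁻¹ * ((x : IdeleComponents) p : ℚ_[(p : ℕ)]) := by
  show ((((A : IdeleComponents) p)⁻¹ * (x : IdeleComponents) p : ℚ_[(p : ℕ)]ˣ) : ℚ_[(p : ℕ)]) = _
  rw [Units.val_mul, Units.val_inv_eq_inv_val]

lemma coset_eq (n : ℕ) (hn : n ≠ 0) :
    {x : FiniteIdeles | IsIntegralIdele x ∧ fnorm x = (n : ℝ)⁻¹}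
      = (fun x => (diag n hn)⁻¹ * x) ⁻¹' zHatUnits := by
  ext x
  simp only [Set.mem_setOf_eq, Set.mem_preimage]
  have hnz : ∀ p : Nat.Primes, ‖((n : ℚ_[(p : ℕ)]))‖ ≠ 0 := by
    intro p
    simp only [ne_eq, norm_eq_zero]
    exact_mod_cast hn
  constructor
  · rintro ⟨hint, hfn⟩
    obtain ⟨m, hm0, hfm, hcomp⟩ := exists_rep x hint
    have hmn : m = n := by
      have h1 : ((m : ℝ))⁻¹ = ((n : ℝ))⁻¹ := hfm ▸ hfn
      have := inv_injective h1
      exact_mod_cast this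
    subst hmn
    rw [mem_zHatUnits_iff]
    intro p
    rw [inv_mul_component, norm_mul, norm_inv, diag_component, hcomp p]
    exact inv_mul_cancel₀ (hnz p)
  · intro h
    rw [mem_zHatUnits_iff] at h
    have hcomp : ∀ p : Nat.Primes,
        ‖((x : IdeleComponents) p : ℚ_[(p : ℕ)])‖ = ‖((n : ℚ_[(p : ℕ)]))‖ := by
      intro p
      have h1 := h p
      rw [inv_mul_component, norm_mul, norm_inv, diag_component,
        inv_mul_eq_one₀ (hnz p)] at h1
      exact h1.symm
    constructor
    · intro p
      rw [hcomp p]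
      exact diag_integral n hn p
    · have hx : x = diag n hn * ((diag n hn)⁻¹ * x) := by group
      rw [hx, fnorm_mul, fnorm_diag n hn, fnorm_of_mem_zHatUnits (by rwa [mem_zHatUnits_iff]),
        mul_one]

end AdelicAux

set_option maxHeartbeats 2000000 in
/-- Let `μ` be a translation-invariant measure on the finite ideles
`𝔸_f^×` of `ℚ` with `μ(Ẑ^×) = 1` (for which `Ẑ^×` is measurable and the idele norm
`|·|_f` is measurable, as holds for any Borel measure on the idele topology).  For
complex `s₁, s₂` with real parts `> 1`, the iterated adelic integral over pairs of
integral ideles with `|x|_f > |y|_f` of `|x|_f^{s₁} |y|_f^{s₂}` equals the double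
zeta function `ζ(s₁,s₂) = ∑_{0 < n₁ < n₂} n₁^{-s₁} n₂^{-s₂}`. -/
theorem adelic_double_zeta [MeasurableSpace FiniteIdeles]
    (μ : Measure FiniteIdeles) [SFinite μ]
    (hinv : ∀ a : FiniteIdeles, MeasurePreserving (fun x => a * x) μ μ)
    (hnorm : Measurable fnorm) (hZmeas : MeasurableSet zHatUnits)
    (hZ : μ zHatUnits = 1)
    (s₁ s₂ : ℂ) (h₁ : 1 < s₁.re) (h₂ : 1 < s₂.re) :
    ∫ z in {q : FiniteIdeles × FiniteIdeles |
        IsIntegralIdele q.1 ∧ IsIntegralIdele q.2 ∧ fnorm q.2 < fnorm q.1},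
      (fnorm z.1 : ℂ) ^ s₁ * (fnorm z.2 : ℂ) ^ s₂ ∂(μ.prod μ)
      = ∑' n : {m : ℕ × ℕ // 0 < m.1 ∧ m.1 < m.2},
          ((n : ℕ × ℕ).1 : ℂ) ^ (-s₁) * ((n : ℕ × ℕ).2 : ℂ) ^ (-s₂) := by
  classical
  set f : FiniteIdeles × FiniteIdeles → ℂ :=
    fun z => (fnorm z.1 : ℂ) ^ s₁ * (fnorm z.2 : ℂ) ^ s₂ with hfdef
  set cos : ℕ → Set FiniteIdeles :=
    fun n => {x : FiniteIdeles | IsIntegralIdele x ∧ fnorm x = (n : ℝ)⁻¹} with hcosdef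
  set s : {m : ℕ × ℕ // 0 < m.1 ∧ m.1 < m.2} → Set (FiniteIdeles × FiniteIdeles) :=
    fun i => cos i.1.1 ×ˢ cos i.1.2 with hsdef
  set c : {m : ℕ × ℕ // 0 < m.1 ∧ m.1 < m.2} → ℂ :=
    fun i => ((((i.1.1 : ℝ))⁻¹ : ℝ) : ℂ) ^ s₁ * ((((i.1.2 : ℝ))⁻¹ : ℝ) : ℂ) ^ s₂ with hcdef
  set r : {m : ℕ × ℕ // 0 < m.1 ∧ m.1 < m.2} → ℝ :=
    fun i => ((i.1.1 : ℝ)) ^ (-s₁.re) * ((i.1.2 : ℝ)) ^ (-s₂.re) with hrdef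
  have hpos2 : ∀ i : {m : ℕ × ℕ // 0 < m.1 ∧ m.1 < m.2}, 0 < i.1.2 :=
    fun i => lt_trans i.2.1 i.2.2
  have hcosmeas : ∀ n : ℕ, n ≠ 0 → MeasurableSet (cos n) := by
    intro n hn
    rw [hcosdef]
    simp only []
    rw [AdelicAux.coset_eq n hn]
    exact (hinv ((AdelicAux.diag n hn)⁻¹)).measurable hZmeas
  have hcosμ : ∀ n : ℕ, n ≠ 0 → μ (cos n) = 1 := by
    intro n hn
    rw [hcosdef]
    simp only []
    rw [AdelicAux.coset_eq n hn,
      (hinv ((AdelicAux.diag n hn)⁻¹)).measure_preimage hZmeas.nullMeasurableSet]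
    exact hZ
  have hmeas_s : ∀ i, MeasurableSet (s i) :=
    fun i => (hcosmeas _ i.2.1.ne').prod (hcosmeas _ (hpos2 i).ne')
  have hμs : ∀ i, (μ.prod μ) (s i) = 1 := by
    intro i
    rw [hsdef]
    simp only []
    rw [Measure.prod_prod, hcosμ _ i.2.1.ne', hcosμ _ (hpos2 i).ne', mul_one]
  have hdisj : Pairwise (Function.onFun Disjoint s) := by
    intro i j hij
    rw [Function.onFun, Set.disjoint_left]
    intro z hzi hzj
    apply hij
    have e1 : i.1.1 = j.1.1 := by
      have h := hzi.1.2.symm.trans hzj.1.2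
      exact_mod_cast inv_injective h
    have e2 : i.1.2 = j.1.2 := by
      have h := hzi.2.2.symm.trans hzj.2.2
      exact_mod_cast inv_injective h
    exact Subtype.ext (Prod.ext e1 e2)
  have hcover : {q : FiniteIdeles × FiniteIdeles |
      IsIntegralIdele q.1 ∧ IsIntegralIdele q.2 ∧ fnorm q.2 < fnorm q.1} = ⋃ i, s i := by
    ext q
    simp only [Set.mem_setOf_eq, Set.mem_iUnion]
    constructor
    · rintro ⟨h1, h2, hlt⟩
      obtain ⟨n₁, hn₁, hf₁, -⟩ := AdelicAux.exists_rep q.1 h1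
      obtain ⟨n₂, hn₂, hf₂, -⟩ := AdelicAux.exists_rep q.2 h2
      have hp2 : (0 : ℝ) < (n₂ : ℝ) := by
        exact_mod_cast Nat.pos_of_ne_zero hn₂
      have hp1 : (0 : ℝ) < (n₁ : ℝ) := by
        exact_mod_cast Nat.pos_of_ne_zero hn₁
      have hlt' : n₁ < n₂ := by
        rw [hf₁, hf₂, inv_lt_inv₀ hp2 hp1] at hlt
        exact_mod_cast hlt
      exact ⟨⟨(n₁, n₂), Nat.pos_of_ne_zero hn₁, hlt'⟩, ⟨h1, hf₁⟩, h2, hf₂⟩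
    · rintro ⟨i, hi⟩
      refine ⟨hi.1.1, hi.2.1, ?_⟩
      rw [hi.1.2, hi.2.2]
      have hp2 : (0 : ℝ) < (i.1.2 : ℝ) := by exact_mod_cast hpos2 i
      have hp1 : (0 : ℝ) < (i.1.1 : ℝ) := by exact_mod_cast i.2.1
      rw [inv_lt_inv₀ hp2 hp1]
      exact_mod_cast i.2.2
  have hcpow : ∀ t : ℂ, Measurable fun w : ℂ => w ^ t := by
    intro t
    have h : (fun w : ℂ => w ^ t) = fun w =>
        if w = 0 then (if t = 0 then 1 else 0) else Complex.exp (Complex.log w * t) := by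
      funext w
      by_cases h : w = 0 <;> simp [h, Complex.cpow_def]
    rw [h]
    exact Measurable.ite measurableSet_eq measurable_const
      (Complex.measurable_exp.comp (Complex.measurable_log.mul measurable_const))
  have hf : Measurable f :=
    ((hcpow s₁).comp (Complex.measurable_ofReal.comp (hnorm.comp measurable_fst))).mul
      ((hcpow s₂).comp (Complex.measurable_ofReal.comp (hnorm.comp measurable_snd)))
  have hconst : ∀ i, ∀ z ∈ s i, f z = c i := by
    rintro i z ⟨⟨-, hz1⟩, -, hz2⟩
    rw [hfdef, hcdef]
    simp only []
    rw [hz1, hz2]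
  have hcnorm : ∀ i, ‖c i‖ = r i := by
    intro i
    have hq1 : (0 : ℝ) < ((i.1.1 : ℕ) : ℝ) := by exact_mod_cast i.2.1
    have hq2 : (0 : ℝ) < ((i.1.2 : ℕ) : ℝ) := by exact_mod_cast hpos2 i
    rw [hcdef, hrdef]
    simp only []
    rw [norm_mul,
      Complex.norm_cpow_eq_rpow_re_of_pos (inv_pos.mpr hq1),
      Complex.norm_cpow_eq_rpow_re_of_pos (inv_pos.mpr hq2),
      Real.inv_rpow hq1.le, Real.inv_rpow hq2.le,
      ← Real.rpow_neg hq1.le, ← Real.rpow_neg hq2.le]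
  have hrnonneg : ∀ i, 0 ≤ r i := by
    intro i
    exact mul_nonneg (Real.rpow_nonneg (Nat.cast_nonneg _) _)
      (Real.rpow_nonneg (Nat.cast_nonneg _) _)
  have hlint : ∫⁻ z in ⋃ i, s i, (‖f z‖₊ : ENNReal) ∂(μ.prod μ)
      = ∑' i, ENNReal.ofReal (r i) := by
    rw [lintegral_iUnion hmeas_s hdisj]
    refine tsum_congr fun i => ?_
    rw [setLIntegral_congr_fun (hmeas_s i)
      (fun z hz => by rw [hconst i z hz]),
      setLIntegral_const, hμs i, mul_one, ← enorm_eq_nnnorm, ← ofReal_norm, hcnorm i]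
  have hsummable : Summable r := by
    have hg : Summable fun m : ℕ × ℕ => ((m.1 : ℝ)) ^ (-s₁.re) * ((m.2 : ℝ)) ^ (-s₂.re) :=
      Summable.mul_of_nonneg (Real.summable_nat_rpow.mpr (by linarith))
        (Real.summable_nat_rpow.mpr (by linarith))
        (fun n => Real.rpow_nonneg (Nat.cast_nonneg n) _)
        (fun n => Real.rpow_nonneg (Nat.cast_nonneg n) _)
    exact hg.subtype _
  have hint : IntegrableOn f (⋃ i, s i) (μ.prod μ) := by
    refine ⟨hf.aestronglyMeasurable, ?_⟩
    show (∫⁻ z, (‖f z‖₊ : ENNReal) ∂((μ.prod μ).restrict (⋃ i, s i))) < ⊤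
    rw [show (∫⁻ z, (‖f z‖₊ : ENNReal) ∂((μ.prod μ).restrict (⋃ i, s i)))
        = ∑' i, ENNReal.ofReal (r i) from hlint,
      ← ENNReal.ofReal_tsum_of_nonneg hrnonneg hsummable]
    exact ENNReal.ofReal_lt_top
  rw [show ∫ z in {q : FiniteIdeles × FiniteIdeles |
        IsIntegralIdele q.1 ∧ IsIntegralIdele q.2 ∧ fnorm q.2 < fnorm q.1},
      (fnorm z.1 : ℂ) ^ s₁ * (fnorm z.2 : ℂ) ^ s₂ ∂(μ.prod μ)
      = ∫ z in ⋃ i, s i, f z ∂(μ.prod μ) by rw [← hcover],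
    integral_iUnion hmeas_s hdisj hint]
  refine tsum_congr fun i => ?_
  rw [setIntegral_congr_fun (hmeas_s i) (fun z hz => hconst i z hz),
    setIntegral_const, measureReal_def, hμs i]
  simp only [ENNReal.toReal_one, one_smul]
  have key : ∀ (n : ℕ) (t : ℂ), 0 < n → ((((n : ℝ))⁻¹ : ℝ) : ℂ) ^ t = (n : ℂ) ^ (-t) := by
    intro n t hn
    have harg : Complex.arg (n : ℂ) ≠ Real.pi := by
      rw [Complex.natCast_arg]
      exact Ne.symm Real.pi_ne_zero
    rw [Complex.ofReal_inv, Complex.ofReal_natCast, Complex.inv_cpow _ _ harg,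
      ← Complex.cpow_neg]
  rw [hcdef]
  simp only []
  rw [key _ s₁ i.2.1, key _ s₂ (hpos2 i)]

end
end

section
/- Let d ≥ 1 and let s₁, …, s_d be complex numbers with Re(s_j) > 1 for all j. Then ∫⋯∫_{{(x₁,…,x_d) : each x_j integral, |x₁|_f > |x₂|_f > ⋯ > |x_d|_f}} |x₁|_f^{s₁} ⋯ |x_d|_f^{s_d} dμ(x₁) ⋯ dμ(x_d) = ζ(s₁,…,s_d), where ζ(s₁,…,s_d) = ∑_{0 < n₁ < ⋯ < n_d} n₁^{-s₁} ⋯ n_d^{-s_d} is the multiple zeta function of depth d. -/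
open MeasureTheory

noncomputable section

namespace AMZ

/-- the `p`-component norm of a finite idele. -/
def cmp (x : FiniteIdeles) (p : Nat.Primes) : ℝ :=
  ‖((x : IdeleComponents) p : ℚ_[(p : ℕ)])‖

lemma cmp_finite (x : FiniteIdeles) : (Function.mulSupport (cmp x)).Finite := x.2

lemma cmp_pos (x : FiniteIdeles) (p : Nat.Primes) : 0 < cmp x p :=
  norm_pos_iff.mpr (Units.ne_zero _)

lemma cmp_mul (x y : FiniteIdeles) (p : Nat.Primes) :
    cmp (x * y) p = cmp x p * cmp y p := by
  simp [cmp, Units.val_mul]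

lemma fnorm_eq (x : FiniteIdeles) : fnorm x = ∏ᶠ p, cmp x p := rfl

lemma fnorm_mul (x y : FiniteIdeles) : fnorm (x * y) = fnorm x * fnorm y := by
  rw [fnorm_eq, fnorm_eq, fnorm_eq, ← finprod_mul_distrib (cmp_finite x) (cmp_finite y)]
  exact finprod_congr fun p => cmp_mul x y p

lemma fnorm_inv (x : FiniteIdeles) : fnorm x⁻¹ = (fnorm x)⁻¹ := by
  rw [fnorm_eq, fnorm_eq, ← finprod_inv_distrib]
  refine finprod_congr fun p => ?_
  simp [cmp]

lemma val_eq (x : FiniteIdeles) (p : Nat.Primes) :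
    cmp x p = (p : ℝ) ^ (-((((x : IdeleComponents) p : ℚ_[(p : ℕ)])).valuation)) :=
  Padic.norm_eq_zpow_neg_valuation (Units.ne_zero _)

lemma cmp_eq_one_iff (x : FiniteIdeles) (p : Nat.Primes) :
    cmp x p = 1 ↔ (((x : IdeleComponents) p : ℚ_[(p : ℕ)])).valuation = 0 := by
  rw [val_eq]
  have hp : (1 : ℝ) < (p : ℕ) := by exact_mod_cast p.2.one_lt
  constructor
  · intro h
    have := zpow_right_injective₀ (by positivity) (ne_of_gt hp) (h.trans (zpow_zero _).symm)
    omega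
  · intro h; simp [h]


lemma norm_natCast_le_one (p : Nat.Primes) (n : ℕ) : ‖(n : ℚ_[(p : ℕ)])‖ ≤ 1 := by
  have := Padic.norm_int_le_one (p := (p : ℕ)) (n : ℤ)
  simpa using this

lemma norm_natCast_eq_one (p : Nat.Primes) {n : ℕ} (hn : n ≠ 0) (h : ¬ (p : ℕ) ∣ n) :
    ‖(n : ℚ_[(p : ℕ)])‖ = 1 := by
  refine le_antisymm (norm_natCast_le_one p n) ?_
  by_contra hlt
  push_neg at hlt
  have : ‖((n : ℤ) : ℚ_[(p : ℕ)])‖ < 1 := by simpa using hlt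
  rw [Padic.norm_intCast_lt_one_iff] at this
  exact h (by exact_mod_cast this)

lemma natCast_mulSupport_finite (n : ℕ) (hn : n ≠ 0) :
    (Function.mulSupport fun p : Nat.Primes => ‖(n : ℚ_[(p : ℕ)])‖).Finite := by
  refine Set.Finite.subset (Set.Finite.preimage (f := fun p : Nat.Primes => (p : ℕ))
    (Set.injOn_of_injective Subtype.val_injective) (n.primeFactors : Finset ℕ).finite_toSet) ?_
  intro p hp
  simp only [Function.mem_mulSupport] at hp
  simp only [Set.mem_preimage, Finset.mem_coe, Nat.mem_primeFactors]
  refine ⟨p.2, ?_, hn⟩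
  by_contra h
  exact hp (norm_natCast_eq_one p hn h)

lemma finprod_norm_prime (q : Nat.Primes) :
    ∏ᶠ p : Nat.Primes, ‖((q : ℕ) : ℚ_[(p : ℕ)])‖ = ((q : ℕ) : ℝ)⁻¹ := by
  rw [finprod_eq_single _ q]
  · exact Padic.norm_p
  · intro p hpq
    refine norm_natCast_eq_one p q.2.ne_zero ?_
    intro hdvd
    exact hpq (Subtype.ext ((Nat.prime_dvd_prime_iff_eq p.2 q.2).mp hdvd))

lemma finprod_norm_natCast : ∀ n : ℕ, n ≠ 0 →
    ∏ᶠ p : Nat.Primes, ‖(n : ℚ_[(p : ℕ)])‖ = ((n : ℕ) : ℝ)⁻¹ := by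
  intro n
  induction n using Nat.strong_induction_on with
  | _ n ih =>
    intro hn
    rcases eq_or_ne n 1 with rfl | h1
    · simp
    have hq : n.minFac.Prime := Nat.minFac_prime h1
    set q : Nat.Primes := ⟨n.minFac, hq⟩
    set m := n / n.minFac with hm
    have hnm : n = (q : ℕ) * m := (Nat.mul_div_cancel' n.minFac_dvd).symm
    have hm0 : m ≠ 0 := by
      intro h; rw [h, mul_zero] at hnm; exact hn hnm
    have hmlt : m < n := Nat.div_lt_self (Nat.pos_of_ne_zero hn) hq.one_lt
    have key : ∀ p : Nat.Primes, ‖(n : ℚ_[(p : ℕ)])‖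
        = ‖((q : ℕ) : ℚ_[(p : ℕ)])‖ * ‖(m : ℚ_[(p : ℕ)])‖ := by
      intro p
      rw [hnm]
      push_cast
      exact norm_mul _ _
    calc ∏ᶠ p : Nat.Primes, ‖(n : ℚ_[(p : ℕ)])‖
        = ∏ᶠ p : Nat.Primes, (‖((q : ℕ) : ℚ_[(p : ℕ)])‖ * ‖(m : ℚ_[(p : ℕ)])‖) :=
          finprod_congr key
      _ = (∏ᶠ p : Nat.Primes, ‖((q : ℕ) : ℚ_[(p : ℕ)])‖) *
          ∏ᶠ p : Nat.Primes, ‖(m : ℚ_[(p : ℕ)])‖ :=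
          finprod_mul_distrib (natCast_mulSupport_finite _ hq.ne_zero)
            (natCast_mulSupport_finite _ hm0)
      _ = ((q : ℕ) : ℝ)⁻¹ * ((m : ℕ) : ℝ)⁻¹ := by
          rw [finprod_norm_prime, ih m hmlt hm0]
      _ = ((n : ℕ) : ℝ)⁻¹ := by
          rw [hnm]; push_cast; rw [mul_inv]

/-- diagonal embedding of a positive natural number. -/
def diag (n : ℕ) (hn : n ≠ 0) : FiniteIdeles :=
  ⟨fun p => Units.mk0 (n : ℚ_[(p : ℕ)]) (Nat.cast_ne_zero.mpr hn),
    by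
      refine (natCast_mulSupport_finite n hn).subset ?_
      intro p hp
      simpa using hp⟩

lemma cmp_diag (n : ℕ) (hn : n ≠ 0) (p : Nat.Primes) :
    cmp (diag n hn) p = ‖(n : ℚ_[(p : ℕ)])‖ := rfl

lemma fnorm_diag (n : ℕ) (hn : n ≠ 0) : fnorm (diag n hn) = ((n : ℕ) : ℝ)⁻¹ := by
  rw [fnorm_eq]
  exact (finprod_congr (cmp_diag n hn)).trans (finprod_norm_natCast n hn)


lemma fnorm_one_forall (x : FiniteIdeles) (h : fnorm x = 1) (p : Nat.Primes) :
    cmp x p = 1 := by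
  classical
  set v : Nat.Primes → ℤ :=
    fun p => (((x : IdeleComponents) p : ℚ_[(p : ℕ)])).valuation with hv
  set S : Finset Nat.Primes := (cmp_finite x).toFinset with hSdef
  have hS : ∀ q : Nat.Primes, q ∈ S ↔ cmp x q ≠ 1 := by
    intro q; simp [hSdef, Function.mulSupport]
  have hSv : ∀ q : Nat.Primes, q ∈ S ↔ v q ≠ 0 := by
    intro q; rw [hS]; exact not_congr (cmp_eq_one_iff x q)
  have hprod : fnorm x = ∏ q ∈ S, (q : ℝ) ^ (-(v q)) := by
    rw [fnorm_eq, finprod_eq_prod _ (cmp_finite x)]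
    exact Finset.prod_congr rfl fun q _ => val_eq x q
  set SP : Finset Nat.Primes := S.filter (fun q => 0 < v q) with hSP
  set SN : Finset Nat.Primes := S.filter (fun q => v q < 0) with hSN
  have hunion : S = SP ∪ SN := by
    ext q
    simp only [hSP, hSN, Finset.mem_union, Finset.mem_filter]
    constructor
    · intro hq
      rcases lt_trichotomy (v q) 0 with h' | h' | h'
      · exact Or.inr ⟨hq, h'⟩
      · exact absurd h' ((hSv q).mp hq)
      · exact Or.inl ⟨hq, h'⟩
    · rintro (⟨hq, _⟩ | ⟨hq, _⟩) <;> exact hq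
  have hdisj : Disjoint SP SN := by
    rw [Finset.disjoint_left]
    rintro q hqP hqN
    rw [hSP, Finset.mem_filter] at hqP
    rw [hSN, Finset.mem_filter] at hqN
    omega
  set A : ℕ := ∏ q ∈ SP, (q : ℕ) ^ (v q).toNat with hA
  set B : ℕ := ∏ q ∈ SN, (q : ℕ) ^ (-v q).toNat with hB
  have hAR : ∏ q ∈ SP, (q : ℝ) ^ (-(v q)) = ((A : ℕ) : ℝ)⁻¹ := by
    rw [hA]
    push_cast
    rw [← Finset.prod_inv_distrib]
    refine Finset.prod_congr rfl fun q hq => ?_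
    rw [hSP, Finset.mem_filter] at hq
    rw [← zpow_natCast ((q : ℕ) : ℝ), Int.toNat_of_nonneg hq.2.le, ← zpow_neg]
  have hBR : ∏ q ∈ SN, (q : ℝ) ^ (-(v q)) = ((B : ℕ) : ℝ) := by
    rw [hB]
    push_cast
    refine Finset.prod_congr rfl fun q hq => ?_
    rw [hSN, Finset.mem_filter] at hq
    rw [← zpow_natCast ((q : ℕ) : ℝ), Int.toNat_of_nonneg (by omega : (0:ℤ) ≤ -v q)]
  have hA0 : (A : ℝ) ≠ 0 := by
    rw [hA]
    push_cast
    refine ne_of_gt (Finset.prod_pos fun q _ => ?_)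
    exact pow_pos (by exact_mod_cast q.2.pos) _
  have hone : 1 = ((A : ℕ) : ℝ)⁻¹ * ((B : ℕ) : ℝ) := by
    rw [← hAR, ← hBR, ← Finset.prod_union hdisj, ← hunion, ← hprod, h]
  have hAB : A = B := by
    field_simp at hone
    exact_mod_cast hone
  have hcop : Nat.Coprime A B := by
    rw [hA, hB]
    refine Nat.Coprime.prod_left fun q hq => ?_
    rw [Nat.coprime_prod_right_iff]
    intro r hr
    have hqr : q ≠ r := by
      intro hqr; exact (Finset.disjoint_left.mp hdisj hq) (hqr ▸ hr)
    exact (Nat.Coprime.pow _ _ ((Nat.coprime_primes q.2 r.2).mpr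
      (fun hh => hqr (Subtype.ext hh))))
  have hA1 : A = 1 := by
    have := hcop
    rw [Nat.Coprime, hAB, Nat.gcd_self] at this
    rw [hAB, this]
  have hB1 : B = 1 := hAB ▸ hA1
  have hSPe : SP = ∅ := by
    rw [Finset.eq_empty_iff_forall_notMem]
    intro q hq
    have hdvd : (q : ℕ) ^ (v q).toNat ∣ A := Finset.dvd_prod_of_mem _ hq
    rw [hA1, Nat.dvd_one] at hdvd
    rw [hSP, Finset.mem_filter] at hq
    have hk : (v q).toNat ≠ 0 := by omega
    exact absurd hdvd (Nat.one_lt_pow hk q.2.one_lt).ne'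
  have hSNe : SN = ∅ := by
    rw [Finset.eq_empty_iff_forall_notMem]
    intro q hq
    have hdvd : (q : ℕ) ^ (-v q).toNat ∣ B := Finset.dvd_prod_of_mem _ hq
    rw [hB1, Nat.dvd_one] at hdvd
    rw [hSN, Finset.mem_filter] at hq
    have hk : (-v q).toNat ≠ 0 := by omega
    exact absurd hdvd (Nat.one_lt_pow hk q.2.one_lt).ne'
  by_contra hne
  have : p ∈ S := (hS p).mpr hne
  rw [hunion, hSPe, hSNe] at this
  simp at this


lemma forall_of_fnorm_eq_inv (x : FiniteIdeles) {n : ℕ} (hn : n ≠ 0)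
    (h : fnorm x = ((n : ℕ) : ℝ)⁻¹) (p : Nat.Primes) :
    cmp x p = ‖(n : ℚ_[(p : ℕ)])‖ := by
  have hn0 : ((n : ℕ) : ℝ) ≠ 0 := Nat.cast_ne_zero.mpr hn
  set D := diag n hn with hD
  have hy : fnorm (D⁻¹ * x) = 1 := by
    rw [fnorm_mul, fnorm_inv, hD, fnorm_diag, h, inv_inv]
    field_simp
  have h1 := fnorm_one_forall _ hy p
  have hxD : x = D * (D⁻¹ * x) := by group
  calc cmp x p = cmp (D * (D⁻¹ * x)) p := by rw [← hxD]
    _ = cmp D p * cmp (D⁻¹ * x) p := cmp_mul _ _ p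
    _ = cmp D p * 1 := by rw [h1]
    _ = ‖(n : ℚ_[(p : ℕ)])‖ := by rw [mul_one, hD, cmp_diag]

lemma fnorm_eq_inv_of_forall (x : FiniteIdeles) {n : ℕ} (hn : n ≠ 0)
    (h : ∀ p : Nat.Primes, cmp x p = ‖(n : ℚ_[(p : ℕ)])‖) :
    fnorm x = ((n : ℕ) : ℝ)⁻¹ := by
  rw [fnorm_eq, finprod_congr h, finprod_norm_natCast n hn]

lemma exists_fnorm_of_integral (x : FiniteIdeles) (hx : IsIntegralIdele x) :
    ∃ n : ℕ, n ≠ 0 ∧ fnorm x = ((n : ℕ) : ℝ)⁻¹ := by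
  classical
  set v : Nat.Primes → ℤ :=
    fun p => (((x : IdeleComponents) p : ℚ_[(p : ℕ)])).valuation with hv
  set S : Finset Nat.Primes := (cmp_finite x).toFinset with hSdef
  have hS : ∀ q : Nat.Primes, q ∈ S ↔ cmp x q ≠ 1 := by
    intro q; simp [hSdef, Function.mulSupport]
  have hvnn : ∀ q : Nat.Primes, 0 ≤ v q := by
    intro q
    have h1 : cmp x q ≤ 1 := hx q
    rw [val_eq x q] at h1
    by_contra hneg
    push_neg at hneg
    have hq1 : (1 : ℝ) < (q : ℕ) := by exact_mod_cast q.2.one_lt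
    have : (1 : ℝ) < ((q : ℕ) : ℝ) ^ (-(v q)) := by
      apply one_lt_zpow₀ hq1
      omega
    linarith
  set n : ℕ := ∏ q ∈ S, (q : ℕ) ^ (v q).toNat with hn
  have hn0 : n ≠ 0 := by
    rw [hn]
    exact Finset.prod_ne_zero_iff.mpr fun q _ => pow_ne_zero _ q.2.ne_zero
  refine ⟨n, hn0, fnorm_eq_inv_of_forall x hn0 ?_⟩
  intro p
  have hcast : ((n : ℕ) : ℚ_[(p : ℕ)]) = ∏ q ∈ S, ((q : ℕ) : ℚ_[(p : ℕ)]) ^ (v q).toNat := by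
    rw [hn]; push_cast; rfl
  rw [hcast, norm_prod]
  by_cases hp : p ∈ S
  · rw [Finset.prod_eq_single_of_mem p hp]
    · rw [norm_pow, Padic.norm_p, val_eq x p, inv_pow, ← zpow_natCast ((p:ℕ):ℝ),
        Int.toNat_of_nonneg (hvnn p), ← zpow_neg]
    · intro q hq hqp
      rw [norm_pow, norm_natCast_eq_one p q.2.ne_zero ?_, one_pow]
      intro hdvd
      exact hqp (Subtype.ext ((Nat.prime_dvd_prime_iff_eq p.2 q.2).mp hdvd)).symm
  · have h1 : cmp x p = 1 := by
      by_contra hne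
      exact hp ((hS p).mpr hne)
    rw [h1]
    symm
    refine Finset.prod_eq_one ?_
    intro q hq
    have hqp : q ≠ p := fun h => hp (h ▸ hq)
    rw [norm_pow, norm_natCast_eq_one p q.2.ne_zero ?_, one_pow]
    intro hdvd
    exact hqp (Subtype.ext ((Nat.prime_dvd_prime_iff_eq p.2 q.2).mp hdvd)).symm

lemma integral_of_fnorm_eq_inv (x : FiniteIdeles) {n : ℕ} (hn : n ≠ 0)
    (h : fnorm x = ((n : ℕ) : ℝ)⁻¹) : IsIntegralIdele x := by
  intro p
  have := forall_of_fnorm_eq_inv x hn h p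
  rw [show ‖((x : IdeleComponents) p : ℚ_[(p : ℕ)])‖ = cmp x p from rfl, this]
  exact norm_natCast_le_one p n

lemma fnorm_eq_one_iff (x : FiniteIdeles) : fnorm x = 1 ↔ ∀ p, cmp x p = 1 := by
  constructor
  · exact fnorm_one_forall x
  · intro h
    rw [fnorm_eq, finprod_congr h, finprod_one]


open scoped ENNReal in
lemma tsum_pi_prod : ∀ (d : ℕ) (f : Fin d → ℕ+ → ℝ≥0∞),
    ∑' g : Fin d → ℕ+, ∏ j, f j (g j) = ∏ j, ∑' n, f j n := by
  intro d
  induction d with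
  | zero =>
    intro f
    simp only [Finset.univ_eq_empty, Finset.prod_empty]
    rw [tsum_eq_single (fun i => i.elim0)]
    · intro g hg
      exact absurd (funext fun i => i.elim0) hg
  | succ d ih =>
    intro f
    rw [← (Fin.consEquiv (fun _ : Fin (d + 1) => ℕ+)).tsum_eq]
    have : ∀ p : ℕ+ × (Fin d → ℕ+),
        (∏ j, f j ((Fin.consEquiv (fun _ : Fin (d+1) => ℕ+)) p j))
          = f 0 p.1 * ∏ j : Fin d, f j.succ (p.2 j) := by
      intro p
      rw [Fin.prod_univ_succ]
      simp [Fin.consEquiv]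
    calc ∑' p : ℕ+ × (Fin d → ℕ+), ∏ j, f j ((Fin.consEquiv (fun _ : Fin (d+1) => ℕ+)) p j)
        = ∑' p : ℕ+ × (Fin d → ℕ+), f 0 p.1 * ∏ j : Fin d, f j.succ (p.2 j) :=
          tsum_congr this
      _ = ∑' (a : ℕ+) (h : Fin d → ℕ+), f 0 a * ∏ j : Fin d, f j.succ (h j) :=
          ENNReal.tsum_prod (f := fun (a : ℕ+) (t : Fin d → ℕ+) => f 0 a * ∏ j : Fin d, f j.succ (t j))
      _ = ∑' (a : ℕ+), f 0 a * ∑' h : Fin d → ℕ+, ∏ j : Fin d, f j.succ (h j) := by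
          exact tsum_congr fun a => ENNReal.tsum_mul_left
      _ = (∑' a : ℕ+, f 0 a) * ∑' h : Fin d → ℕ+, ∏ j : Fin d, f j.succ (h j) :=
          ENNReal.tsum_mul_right
      _ = (∑' a : ℕ+, f 0 a) * ∏ j : Fin d, ∑' n, f j.succ n := by rw [ih]
      _ = ∏ j, ∑' n, f j n := by rw [Fin.prod_univ_succ]

open scoped ENNReal in
lemma tsum_pnat_rpow_lt_top {σ : ℝ} (hσ : 1 < σ) :
    ∑' n : ℕ+, ENNReal.ofReal ((n : ℝ)⁻¹ ^ σ) ≠ ⊤ := by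
  have hsum : Summable fun n : ℕ => (1 : ℝ) / (n : ℝ) ^ σ :=
    Real.summable_one_div_nat_rpow.mpr hσ
  have hsum' : Summable fun n : ℕ+ => (n : ℝ)⁻¹ ^ σ := by
    have := hsum.comp_injective (PNat.coe_injective)
    refine this.congr fun n => ?_
    simp [Real.inv_rpow, one_div, Function.comp]
  rw [← ENNReal.ofReal_tsum_of_nonneg (fun n => by positivity) hsum']
  exact ENNReal.ofReal_ne_top


end AMZ


open AMZ in
set_option maxHeartbeats 1000000 in
/-- Let `μ` be a translation-invariant measure on the finite ideles
`𝔸_f^×` of `ℚ` with `μ(Ẑ^×) = 1` (for which `Ẑ^×` is measurable and the idele norm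
`|·|_f` is measurable, as holds for any Borel measure on the idele topology).  For
`d ≥ 1` and complex `s₁, …, s_d` with real parts `> 1`, the `d`-fold iterated adelic
integral over tuples of integral ideles with `|x₁|_f > ⋯ > |x_d|_f` of
`∏ |x_j|_f^{s_j}` equals the multiple zeta function
`ζ(s₁,…,s_d) = ∑_{0 < n₁ < ⋯ < n_d} n₁^{-s₁} ⋯ n_d^{-s_d}` of depth `d`. -/
theorem adelic_multiple_zeta [MeasurableSpace FiniteIdeles]
    (μ : Measure FiniteIdeles) [SigmaFinite μ]
    (hinv : ∀ a : FiniteIdeles, MeasurePreserving (fun x => a * x) μ μ)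
    (hnorm : Measurable fnorm) (hZmeas : MeasurableSet zHatUnits)
    (hZ : μ zHatUnits = 1)
    (d : ℕ) (hd : 1 ≤ d) (s : Fin d → ℂ) (hs : ∀ j, 1 < (s j).re) :
    ∫ x in {x : Fin d → FiniteIdeles |
        (∀ j, IsIntegralIdele (x j)) ∧ ∀ i j, i < j → fnorm (x j) < fnorm (x i)},
      ∏ j, (fnorm (x j) : ℂ) ^ (s j) ∂(Measure.pi fun _ => μ)
      = ∑' n : {g : Fin d → ℕ // StrictMono g ∧ ∀ j, 0 < g j},
          ∏ j, ((n : Fin d → ℕ) j : ℂ) ^ (-(s j)) := by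
  classical
  set C : ℕ → Set FiniteIdeles := fun n => fnorm ⁻¹' {((n : ℝ))⁻¹} with hCdef
  have hCmem : ∀ (n : ℕ) (x : FiniteIdeles), x ∈ C n ↔ fnorm x = ((n : ℝ))⁻¹ := by
    intro n x; rw [hCdef]; rfl
  have hCmeas : ∀ n, MeasurableSet (C n) := fun n => hnorm (measurableSet_singleton _)
  have hC1 : C 1 = zHatUnits := by
    ext x
    rw [hCmem, Nat.cast_one, inv_one, fnorm_eq_one_iff]
    rfl
  have hCμ : ∀ n : ℕ, n ≠ 0 → μ (C n) = 1 := by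
    intro n hn
    have hpre : (fun x => diag n hn * x) ⁻¹' (C n) = C 1 := by
      ext x
      rw [Set.mem_preimage, hCmem, hCmem, Nat.cast_one, inv_one, fnorm_mul, fnorm_diag]
      have hn0 : ((n : ℝ))⁻¹ ≠ 0 := by
        have : ((n : ℕ) : ℝ) ≠ 0 := Nat.cast_ne_zero.mpr hn
        positivity
      constructor
      · intro h
        exact mul_left_cancel₀ hn0 (h.trans (mul_one _).symm)
      · intro h; rw [h, mul_one]
    have := (hinv (diag n hn)).measure_preimage (hCmeas n).nullMeasurableSet
    rw [hpre, hC1, hZ] at this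
    exact this.symm
  set T : {g : Fin d → ℕ // StrictMono g ∧ ∀ j, 0 < g j} → Set (Fin d → FiniteIdeles) :=
    fun g => Set.univ.pi (fun j => C (g.1 j)) with hTdef
  have hTmem : ∀ g x, x ∈ T g ↔ ∀ j, fnorm (x j) = ((g.1 j : ℝ))⁻¹ := by
    intro g x
    rw [hTdef, Set.mem_univ_pi]
    exact forall_congr' fun j => hCmem _ _
  have hTmeas : ∀ g, MeasurableSet (T g) := fun g => MeasurableSet.univ_pi fun j => hCmeas _
  have hinvlt : ∀ {a b : ℕ}, a ≠ 0 → b ≠ 0 → (((a : ℝ))⁻¹ < ((b : ℝ))⁻¹ ↔ b < a) := by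
    intro a b ha hb
    have ha' : (0:ℝ) < a := by exact_mod_cast Nat.pos_of_ne_zero ha
    have hb' : (0:ℝ) < b := by exact_mod_cast Nat.pos_of_ne_zero hb
    rw [inv_lt_inv₀ ha' hb', Nat.cast_lt]
  have hSet : {x : Fin d → FiniteIdeles |
      (∀ j, IsIntegralIdele (x j)) ∧ ∀ i j, i < j → fnorm (x j) < fnorm (x i)}
      = ⋃ g, T g := by
    ext x
    simp only [Set.mem_setOf_eq, Set.mem_iUnion]
    constructor
    · rintro ⟨hint, hchain⟩
      have hex : ∀ j, ∃ n : ℕ, n ≠ 0 ∧ fnorm (x j) = ((n : ℝ))⁻¹ :=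
        fun j => exists_fnorm_of_integral (x j) (hint j)
      choose g hg0 hgf using hex
      have hmono : StrictMono g := by
        intro i j hij
        have := hchain i j hij
        rw [hgf i, hgf j] at this
        exact (hinvlt (hg0 j) (hg0 i)).mp this
      refine ⟨⟨g, hmono, fun j => Nat.pos_of_ne_zero (hg0 j)⟩, ?_⟩
      rw [hTmem]
      exact hgf
    · rintro ⟨g, hx⟩
      rw [hTmem] at hx
      refine ⟨fun j => integral_of_fnorm_eq_inv (x j) (g.2.2 j).ne' (hx j), ?_⟩
      intro i j hij
      rw [hx i, hx j]
      exact (hinvlt (g.2.2 j).ne' (g.2.2 i).ne').mpr (g.2.1 hij)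
  have hμT : ∀ g, (Measure.pi fun _ : Fin d => μ) (T g) = 1 := by
    intro g
    rw [hTdef, Measure.pi_pi]
    exact Finset.prod_eq_one fun j _ => hCμ _ (g.2.2 j).ne'
  have hTdisj : Pairwise (Function.onFun Disjoint T) := by
    intro g g' hne
    rw [Function.onFun, Set.disjoint_left]
    intro x hx hx'
    rw [hTmem] at hx hx'
    apply hne
    refine Subtype.ext (funext fun j => ?_)
    have := (hx j).symm.trans (hx' j)
    rw [inv_inj, Nat.cast_inj] at this
    exact this
  have hfmeas : Measurable fun x : Fin d → FiniteIdeles =>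
      ∏ j, ((fnorm (x j) : ℝ) : ℂ) ^ s j := by
    refine Finset.measurable_prod _ fun j _ => ?_
    exact (Complex.measurable_ofReal.comp (hnorm.comp (measurable_pi_apply j))).pow
      measurable_const
  have hconst : ∀ g, ∀ x ∈ T g,
      (∏ j, ((fnorm (x j) : ℝ) : ℂ) ^ s j) = ∏ j, ((g.1 j : ℕ) : ℂ) ^ (-(s j)) := by
    intro g x hx
    rw [hTmem] at hx
    refine Finset.prod_congr rfl fun j _ => ?_
    rw [hx j]
    have harg : ((g.1 j : ℕ) : ℂ).arg ≠ Real.pi := by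
      rw [Complex.natCast_arg]
      exact Real.pi_ne_zero.symm
    push_cast
    rw [Complex.inv_cpow _ _ harg, ← Complex.cpow_neg]
  have hnormval : ∀ g, ∀ x ∈ T g,
      ‖∏ j, ((fnorm (x j) : ℝ) : ℂ) ^ s j‖ = ∏ j, (((g.1 j : ℕ) : ℝ))⁻¹ ^ (s j).re := by
    intro g x hx
    rw [hTmem] at hx
    rw [norm_prod]
    refine Finset.prod_congr rfl fun j _ => ?_
    rw [hx j, Complex.norm_cpow_eq_rpow_re_of_pos]
    have : (0:ℝ) < ((g.1 j : ℕ) : ℝ) := by exact_mod_cast g.2.2 j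
    positivity
  have hIntOn : IntegrableOn (fun x => ∏ j, ((fnorm (x j) : ℝ) : ℂ) ^ s j)
      (⋃ g, T g) (Measure.pi fun _ => μ) := by
    constructor
    · exact hfmeas.aestronglyMeasurable.restrict
    · rw [hasFiniteIntegral_iff_norm]
      rw [lintegral_iUnion hTmeas hTdisj]
      have heach : ∀ g, ∫⁻ x in T g,
          ENNReal.ofReal ‖∏ j, ((fnorm (x j) : ℝ) : ℂ) ^ s j‖ ∂(Measure.pi fun _ => μ)
          = ENNReal.ofReal (∏ j, (((g.1 j : ℕ) : ℝ))⁻¹ ^ (s j).re) := by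
        intro g
        rw [setLIntegral_congr_fun (hTmeas g)
          (fun x hx => by rw [hnormval g x hx])]
        rw [setLIntegral_const, hμT g, mul_one]
      refine lt_of_le_of_lt (ENNReal.tsum_le_tsum fun g => (heach g).le) ?_
      calc ∑' g : {g : Fin d → ℕ // StrictMono g ∧ ∀ j, 0 < g j},
            ENNReal.ofReal (∏ j, (((g.1 j : ℕ) : ℝ))⁻¹ ^ (s j).re)
          = ∑' g : {g : Fin d → ℕ // StrictMono g ∧ ∀ j, 0 < g j},
            ∏ j, ENNReal.ofReal ((((g.1 j : ℕ) : ℝ))⁻¹ ^ (s j).re) :=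
            tsum_congr fun g => ENNReal.ofReal_prod_of_nonneg fun j _ => by positivity
        _ ≤ ∑' t : Fin d → ℕ+, ∏ j, ENNReal.ofReal ((((t j : ℕ) : ℝ))⁻¹ ^ (s j).re) := by
            have hι : Function.Injective
                (fun g : {g : Fin d → ℕ // StrictMono g ∧ ∀ j, 0 < g j} =>
                  (fun j => ⟨g.1 j, g.2.2 j⟩ : Fin d → ℕ+)) := by
              intro a b hab
              refine Subtype.ext (funext fun j => ?_)
              simpa using congrFun hab j
            exact ENNReal.tsum_comp_le_tsum_of_injective hι
              (fun t => ∏ j, ENNReal.ofReal ((((t j : ℕ) : ℝ))⁻¹ ^ (s j).re))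
        _ = ∏ j, ∑' n : ℕ+, ENNReal.ofReal (((n : ℝ))⁻¹ ^ (s j).re) :=
            tsum_pi_prod d (fun j n => ENNReal.ofReal ((((n : ℕ) : ℝ))⁻¹ ^ (s j).re))
        _ < ⊤ := ENNReal.prod_lt_top fun j _ =>
            (tsum_pnat_rpow_lt_top (hs j)).lt_top
  rw [hSet, integral_iUnion hTmeas hTdisj hIntOn]
  refine tsum_congr fun g => ?_
  rw [setIntegral_congr_fun (hTmeas g) (fun x hx => hconst g x hx),
    setIntegral_const, measureReal_def, hμT g, ENNReal.toReal_one, one_smul]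

end
end

section
/- Let s be a complex number with Re(s) > 1. Then ∫_{{x integral}} |x|_f^{s} dμ(x) = ζ(s), the Riemann zeta function. -/
open MeasureTheory

noncomputable section

lemma padic_norm_natCast (p : Nat.Primes) (n : ℕ) (hn : n ≠ 0) :
    ‖(n : ℚ_[(p : ℕ)])‖ = (p : ℝ) ^ (-(padicValNat p n : ℤ)) := by
  rw [Padic.norm_eq_zpow_neg_valuation (by exact_mod_cast Nat.cast_ne_zero.mpr hn),
    Padic.valuation_natCast]

lemma padic_norm_natCast_eq_one (p : Nat.Primes) (n : ℕ) (hn : n ≠ 0)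
    (h : ¬ (p : ℕ) ∣ n) : ‖(n : ℚ_[(p : ℕ)])‖ = 1 := by
  rw [padic_norm_natCast p n hn, padicValNat.eq_zero_of_not_dvd h]
  simp

lemma finprod_padic_norm_natCast (n : ℕ) (hn : n ≠ 0) :
    (∏ᶠ p : Nat.Primes, ‖(n : ℚ_[(p : ℕ)])‖) = (n : ℝ)⁻¹ := by
  have hinj : Function.Injective
      ((fun q => ⟨q.1, Nat.prime_of_mem_primeFactors q.2⟩) : {x // x ∈ n.primeFactors} → Nat.Primes) := by
    intro a b h
    have : (a : ℕ) = (b : ℕ) := congrArg (fun x : Nat.Primes => (x : ℕ)) h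
    exact Subtype.ext this
  set T : Finset Nat.Primes := n.primeFactors.attach.map ⟨_, hinj⟩ with hT
  have hsub : (Function.mulSupport fun p : Nat.Primes => ‖(n : ℚ_[(p : ℕ)])‖) ⊆ ↑T := by
    intro p hp
    simp only [Function.mem_mulSupport] at hp
    have hdvd : (p : ℕ) ∣ n := by
      by_contra h
      exact hp (padic_norm_natCast_eq_one p n hn h)
    have hmem : (p : ℕ) ∈ n.primeFactors := Nat.mem_primeFactors.mpr ⟨p.2, hdvd, hn⟩
    simp only [hT, Finset.coe_map, Set.mem_image, Finset.mem_coe, Finset.mem_attach]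
    exact ⟨⟨(p : ℕ), hmem⟩, by simp, Subtype.ext rfl⟩
  rw [finprod_eq_prod_of_mulSupport_subset _ hsub]
  have h1 : ∀ p ∈ T, ‖(n : ℚ_[(p : ℕ)])‖ = ((p : ℕ) : ℝ) ^ (-(padicValNat p n : ℤ)) :=
    fun p _ => padic_norm_natCast p n hn
  rw [Finset.prod_congr rfl h1, hT, Finset.prod_map]
  show ∏ x ∈ n.primeFactors.attach, ((x : ℕ) : ℝ) ^ (-(padicValNat x n : ℤ)) = _
  rw [Finset.prod_attach n.primeFactors
    (f := fun q : ℕ => (q : ℝ) ^ (-(padicValNat q n : ℤ)))]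
  have h2 : ∀ q ∈ n.primeFactors, (q : ℝ) ^ (-(padicValNat q n : ℤ))
      = ((q ^ (n.factorization q) : ℕ) : ℝ)⁻¹ := by
    intro q hq
    rw [Nat.factorization_def n (Nat.prime_of_mem_primeFactors hq), zpow_neg, zpow_natCast]
    norm_cast
  rw [Finset.prod_congr rfl h2, Finset.prod_inv_distrib, ← Nat.cast_prod]
  have h3 : ∏ x ∈ n.primeFactors, x ^ n.factorization x = n := by
    rw [← Nat.support_factorization]
    exact Nat.factorization_prod_pow_eq_self hn
  rw [h3]

namespace AdelicZeta

abbrev cmp (x : FiniteIdeles) (p : Nat.Primes) : ℚ_[(p : ℕ)] :=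
  ((x : IdeleComponents) p : ℚ_[(p : ℕ)])

lemma coe_injective : Function.Injective ((↑) : Nat.Primes → ℕ) :=
  fun _ _ h => Subtype.ext h

lemma norm_ne_one_finite (n : ℕ) (hn : n ≠ 0) :
    {p : Nat.Primes | ‖(n : ℚ_[(p : ℕ)])‖ ≠ 1}.Finite := by
  refine (Set.Finite.preimage (Set.injOn_of_injective coe_injective)
    n.primeFactors.finite_toSet).subset ?_
  intro (p : Nat.Primes) hp
  have hp' : ‖(n : ℚ_[(p : ℕ)])‖ ≠ 1 := hp
  have hdvd : (p : ℕ) ∣ n := by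
    by_contra h
    exact hp' (padic_norm_natCast_eq_one p n hn h)
  exact Set.mem_preimage.mpr (Finset.mem_coe.mpr (Nat.mem_primeFactors.mpr ⟨p.2, hdvd, hn⟩))

def iota (n : ℕ) (hn : n ≠ 0) : FiniteIdeles :=
  ⟨fun p => Units.mk0 (n : ℚ_[(p : ℕ)]) (Nat.cast_ne_zero.mpr hn), norm_ne_one_finite n hn⟩

lemma cmp_iota (n : ℕ) (hn : n ≠ 0) (p : Nat.Primes) :
    cmp (iota n hn) p = (n : ℚ_[(p : ℕ)]) := rfl

lemma cmp_mul (x y : FiniteIdeles) (p : Nat.Primes) :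
    cmp (x * y) p = cmp x p * cmp y p := rfl

lemma cmp_inv (x : FiniteIdeles) (p : Nat.Primes) :
    cmp x⁻¹ p = (cmp x p)⁻¹ := by
  simp only [cmp]
  rw [show ((x⁻¹ : FiniteIdeles) : IdeleComponents) = (x : IdeleComponents)⁻¹ from rfl]
  rw [Pi.inv_apply, Units.val_inv_eq_inv_val]

lemma cmp_ne_zero (x : FiniteIdeles) (p : Nat.Primes) : cmp x p ≠ 0 :=
  Units.ne_zero _

def S (i : ℕ) : Set FiniteIdeles :=
  (fun x => iota (i + 1) i.succ_ne_zero * x) '' zHatUnits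

lemma mem_S {i : ℕ} {x : FiniteIdeles} :
    x ∈ S i ↔ ∀ p : Nat.Primes, ‖cmp x p‖ = ‖(((i : ℕ) + 1 : ℕ) : ℚ_[(p : ℕ)])‖ := by
  constructor
  · rintro ⟨u, hu, rfl⟩ p
    rw [cmp_mul, norm_mul, cmp_iota, hu p, mul_one]
  · intro h
    refine ⟨(iota (i + 1) i.succ_ne_zero)⁻¹ * x, fun p => ?_, by group⟩
    show ‖cmp ((iota (i + 1) i.succ_ne_zero)⁻¹ * x) p‖ = 1
    rw [cmp_mul, norm_mul, cmp_inv, norm_inv, cmp_iota, h p]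
    have hne : ‖(((i : ℕ) + 1 : ℕ) : ℚ_[(p : ℕ)])‖ ≠ 0 := by
      rw [norm_ne_zero_iff]
      exact Nat.cast_ne_zero.mpr i.succ_ne_zero
    exact inv_mul_cancel₀ hne

lemma fnorm_of_mem_S {i : ℕ} {x : FiniteIdeles} (hx : x ∈ S i) :
    fnorm x = (((i : ℕ) + 1 : ℕ) : ℝ)⁻¹ := by
  rw [mem_S] at hx
  unfold fnorm
  rw [finprod_congr hx]
  exact finprod_padic_norm_natCast (i + 1) i.succ_ne_zero

lemma S_eq_preimage (i : ℕ) :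
    S i = (fun x => (iota (i + 1) i.succ_ne_zero)⁻¹ * x) ⁻¹' zHatUnits := by
  ext x
  constructor
  · rintro ⟨u, hu, rfl⟩
    simpa [Set.mem_preimage, inv_mul_cancel_left] using hu
  · intro hx
    exact ⟨_, hx, by group⟩

lemma padic_val_eq (x : FiniteIdeles) (hx : IsIntegralIdele x) (p : Nat.Primes) :
    ‖cmp x p‖ = (p : ℝ) ^ (-(((cmp x p).valuation.toNat : ℕ) : ℤ)) := by
  have h1 : (1 : ℝ) < ((p : ℕ) : ℝ) := Nat.one_lt_cast.mpr p.2.one_lt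
  rw [Padic.norm_eq_zpow_neg_valuation (cmp_ne_zero x p)]
  have hnonneg : 0 ≤ (cmp x p).valuation := by
    by_contra hneg
    push_neg at hneg
    have hlt : (1 : ℝ) < ((p : ℕ) : ℝ) ^ (-(cmp x p).valuation) :=
      one_lt_zpow₀ h1 (by omega)
    have := hx p
    rw [Padic.norm_eq_zpow_neg_valuation (cmp_ne_zero x p)] at this
    linarith
  congr 1
  omega

lemma exists_S_of_integral {x : FiniteIdeles} (hx : IsIntegralIdele x) :
    ∃ i, x ∈ S i := by
  classical
  have hfin : {p : Nat.Primes | ‖cmp x p‖ ≠ 1}.Finite := x.2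
  set k : Nat.Primes → ℕ := fun p => (cmp x p).valuation.toNat with hk
  have hval : ∀ p : Nat.Primes, ‖cmp x p‖ = ((p : ℕ) : ℝ) ^ (-(k p : ℤ)) :=
    fun p => padic_val_eq x hx p
  have hk0 : ∀ p : Nat.Primes, ‖cmp x p‖ = 1 → k p = 0 := by
    intro p h1
    have h2 : ((p : ℕ) : ℝ) ^ (-(k p : ℤ)) = ((p : ℕ) : ℝ) ^ (0 : ℤ) := by
      rw [← hval p, h1]; simp
    have hp1 : (1 : ℝ) < ((p : ℕ) : ℝ) := Nat.one_lt_cast.mpr p.2.one_lt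
    have := zpow_right_injective₀ (by linarith : (0:ℝ) < ((p : ℕ) : ℝ)) (by linarith) h2
    omega
  set T : Finset Nat.Primes := hfin.toFinset with hT
  set n : ℕ := ∏ p ∈ T, (p : ℕ) ^ (k p) with hn
  have hn0 : n ≠ 0 :=
    Finset.prod_ne_zero_iff.mpr fun p _ => pow_ne_zero _ p.2.pos.ne'
  have hfact : ∀ q : Nat.Primes, padicValNat q n = k q := by
    intro q
    have hne : ∀ p ∈ T, ((p : ℕ) ^ (k p)) ≠ 0 := fun p _ => pow_ne_zero _ p.2.pos.ne'
    have h1 : n.factorization = ∑ p ∈ T, Finsupp.single (p : ℕ) (k p) := by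
      rw [hn, Nat.factorization_prod hne]
      exact Finset.sum_congr rfl fun p _ => (Nat.Prime.factorization_pow p.2)
    have h2 : n.factorization (q : ℕ) = ∑ p ∈ T, if p = q then k p else 0 := by
      rw [h1, Finsupp.finset_sum_apply]
      refine Finset.sum_congr rfl fun p _ => ?_
      rw [Finsupp.single_apply]
      by_cases hpq : p = q
      · simp [hpq]
      · have : (p : ℕ) ≠ (q : ℕ) := fun h => hpq (Subtype.ext h)
        simp [hpq, this]
    rw [← Nat.factorization_def n q.2, h2, Finset.sum_ite_eq' T q k]
    by_cases hq : q ∈ T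
    · simp [hq]
    · have : ‖cmp x q‖ = 1 := by
        by_contra h
        exact hq (hfin.mem_toFinset.mpr h)
      simp [hq, hk0 q this]
  refine ⟨n - 1, mem_S.mpr fun p => ?_⟩
  have hsucc : (n - 1) + 1 = n := Nat.succ_pred_eq_of_pos (Nat.pos_of_ne_zero hn0)
  rw [hval p]
  simp only [hsucc]
  rw [padic_norm_natCast p n hn0, hfact p]

lemma integral_of_mem_S {i : ℕ} {x : FiniteIdeles} (hx : x ∈ S i) :
    IsIntegralIdele x := by
  intro p
  rw [show ‖((x : IdeleComponents) p : ℚ_[(p : ℕ)])‖ = ‖cmp x p‖ from rfl, mem_S.mp hx p,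
    show (((i : ℕ) + 1 : ℕ) : ℚ_[(p : ℕ)]) = (((i + 1 : ℕ) : ℤ) : ℚ_[(p : ℕ)]) by push_cast; ring]
  exact Padic.norm_int_le_one _

lemma iUnion_S : (⋃ i, S i) = {x : FiniteIdeles | IsIntegralIdele x} := by
  ext x
  simp only [Set.mem_iUnion, Set.mem_setOf_eq]
  exact ⟨fun ⟨i, hi⟩ => integral_of_mem_S hi, exists_S_of_integral⟩

lemma S_disjoint : Pairwise (Function.onFun Disjoint S) := by
  intro i j hij
  rw [Function.onFun, Set.disjoint_left]
  intro x hxi hxj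
  have h1 := fnorm_of_mem_S hxi
  have h2 := fnorm_of_mem_S hxj
  rw [h1] at h2
  have : ((i : ℕ) + 1 : ℕ) = ((j : ℕ) + 1 : ℕ) := by
    have := inv_injective h2
    exact_mod_cast this
  omega

end AdelicZeta

open AdelicZeta

/-- Let `μ` be a translation-invariant measure on the finite ideles
`𝔸_f^×` of `ℚ` with `μ(Ẑ^×) = 1` (for which `Ẑ^×` is measurable and the idele norm
`|·|_f` is measurable, as holds for any Borel measure on the idele topology).  For
complex `s` with `Re s > 1`, the adelic integral `∫_{x integral} |x|_f^s dμ(x)`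
equals the Riemann zeta function `ζ(s)`. -/
theorem adelic_riemann_zeta [MeasurableSpace FiniteIdeles]
    (μ : Measure FiniteIdeles)
    (hinv : ∀ a : FiniteIdeles, MeasurePreserving (fun x => a * x) μ μ)
    (hnorm : Measurable fnorm) (hZmeas : MeasurableSet zHatUnits)
    (hZ : μ zHatUnits = 1)
    (s : ℂ) (hs : 1 < s.re) :
    ∫ x in {x : FiniteIdeles | IsIntegralIdele x}, (fnorm x : ℂ) ^ s ∂μ
      = riemannZeta s := by
  classical
  have hSmeas : ∀ i, MeasurableSet (S i) := by
    intro i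
    rw [S_eq_preimage]
    exact (hinv _).measurable hZmeas
  have hSmu : ∀ i, μ (S i) = 1 := by
    intro i
    rw [S_eq_preimage, (hinv _).measure_preimage hZmeas.nullMeasurableSet]
    exact hZ
  have hs0 : s ≠ 0 := by
    intro h; rw [h] at hs; simp at hs; linarith
  have hfmeas : Measurable fun x : FiniteIdeles => ((fnorm x : ℝ) : ℂ) ^ s := by
    have h1 : Measurable fun z : ℂ => z ^ s := by
      have heq : (fun z : ℂ => z ^ s)
          = fun z => if z = 0 then 0 else Complex.exp (Complex.log z * s) := by
        funext z
        by_cases h : z = 0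
        · simp [h, Complex.zero_cpow hs0]
        · rw [if_neg h, Complex.cpow_def_of_ne_zero h]
      rw [heq]
      exact Measurable.ite (MeasurableSet.singleton 0)
        measurable_const
        (Complex.measurable_exp.comp (Complex.measurable_log.mul_const s))
    exact h1.comp (Complex.measurable_ofReal.comp hnorm)
  have hconst : ∀ i : ℕ, ∀ x ∈ S i,
      ((fnorm x : ℝ) : ℂ) ^ s = 1 / ((i : ℂ) + 1) ^ s := by
    intro i x hx
    rw [fnorm_of_mem_S hx]
    have harg : (((i + 1 : ℕ) : ℂ)).arg ≠ Real.pi := by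
      rw [Complex.natCast_arg]
      exact Real.pi_ne_zero.symm
    rw [Complex.ofReal_inv, Complex.ofReal_natCast,
      Complex.inv_cpow _ _ harg, one_div]
    norm_num
  have hnormval : ∀ i : ℕ, ∀ x ∈ S i,
      ‖((fnorm x : ℝ) : ℂ) ^ s‖ = (((i + 1 : ℕ) : ℝ))⁻¹ ^ s.re := by
    intro i x hx
    have hpos : (0 : ℝ) < (((i + 1 : ℕ) : ℝ))⁻¹ := by positivity
    rw [fnorm_of_mem_S hx,
      Complex.norm_cpow_eq_rpow_re_of_pos hpos]
  have hsum : Summable fun i : ℕ => (((i + 1 : ℕ) : ℝ))⁻¹ ^ s.re := by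
    have h1 : Summable fun n : ℕ => 1 / (n : ℝ) ^ s.re :=
      (Real.summable_one_div_nat_rpow).mpr hs
    have h2 : Summable fun n : ℕ => 1 / ((n + 1 : ℕ) : ℝ) ^ s.re :=
      (summable_nat_add_iff 1).mpr h1
    refine h2.congr fun i => ?_
    rw [Real.inv_rpow (by positivity), one_div]
  have hInt : IntegrableOn (fun x => ((fnorm x : ℝ) : ℂ) ^ s) (⋃ i, S i) μ := by
    refine ⟨hfmeas.aestronglyMeasurable, ?_⟩
    rw [hasFiniteIntegral_iff_norm]
    rw [lintegral_iUnion hSmeas S_disjoint]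
    have heach : ∀ i, ∫⁻ a in S i, ENNReal.ofReal ‖((fnorm a : ℝ) : ℂ) ^ s‖ ∂μ
        = ENNReal.ofReal ((((i + 1 : ℕ) : ℝ))⁻¹ ^ s.re) := by
      intro i
      rw [setLIntegral_congr_fun (hSmeas i)
        (fun x hx => by rw [hnormval i x hx])]
      rw [setLIntegral_const, hSmu i, mul_one]
    simp_rw [heach]
    rw [← ENNReal.ofReal_tsum_of_nonneg (fun i => by positivity) hsum]
    exact ENNReal.ofReal_lt_top
  rw [← iUnion_S, integral_iUnion hSmeas S_disjoint hInt]
  have heach : ∀ i : ℕ, ∫ x in S i, ((fnorm x : ℝ) : ℂ) ^ s ∂μ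
      = 1 / ((i : ℂ) + 1) ^ s := by
    intro i
    rw [setIntegral_congr_fun (hSmeas i) (hconst i), setIntegral_const, Measure.real, hSmu i]
    simp
  rw [tsum_congr heach]
  exact (zeta_eq_tsum_one_div_nat_add_one_cpow hs).symm


end
end

section
/- Let f, g : 𝔸_f^× → ℂ be defined by f(x) = a_n for x ∈ n·Ẑ^×, f(x) = 0 if x is not integral, and g(x) = b_n for x ∈ n·Ẑ^×, g(x) = 0 if x is not integral. Let s₁, s₂ be complex numbers with Re(s₁) > k and Re(s₂) > l. Then ∫∫_{{(x,y) : |x|_f > |y|_f}} f(x)|x|_f^{s₁} g(y)|y|_f^{s₂} dμ(x) dμ(y) = L(F,G,s₁,s₂), where L(F,G,s₁,s₂) = ∑_{0 < n₁ < n₂} a_{n₁} b_{n₂} n₁^{-s₁} n₂^{-s₂} is the iterated (double) L-function of F and G. -/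
open MeasureTheory

noncomputable section

namespace AdelicAux

lemma norm_nat_le_one (p : Nat.Primes) (n : ℕ) : ‖((n : ℕ) : ℚ_[(p : ℕ)])‖ ≤ 1 := by
  have := Padic.norm_int_le_one (p := (p : ℕ)) (n : ℤ)
  simpa using this

lemma norm_nat_eq_one_of_not_dvd {p : Nat.Primes} {n : ℕ} (h : ¬ (p : ℕ) ∣ n) :
    ‖(n : ℚ_[(p : ℕ)])‖ = 1 := by
  rcases (norm_nat_le_one p n).lt_or_eq with h2 | h2
  · exfalso
    apply h
    have := (Padic.norm_intCast_lt_one_iff (p := (p : ℕ)) (k := (n : ℤ))).1 (by simpa using h2)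
    exact_mod_cast this
  · exact h2

lemma mulSupport_finite (n : ℕ) (hn : n ≠ 0) :
    (Function.mulSupport fun p : Nat.Primes => ‖(n : ℚ_[(p : ℕ)])‖).Finite := by
  apply Set.Finite.subset ((Set.finite_Iic n).preimage
    (Set.injOn_of_injective Subtype.val_injective))
  intro p hp
  haveI : Fact (p : ℕ).Prime := ⟨p.2⟩
  have hp : ‖(n : ℚ_[(p : ℕ)])‖ ≠ 1 := hp
  have hdvd : (p : ℕ) ∣ n := by
    by_contra hd
    exact hp (norm_nat_eq_one_of_not_dvd hd)
  exact Nat.le_of_dvd (Nat.pos_of_ne_zero hn) hdvd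

lemma finprod_norm : ∀ (n : ℕ), n ≠ 0 →
    ∏ᶠ p : Nat.Primes, ‖(n : ℚ_[(p : ℕ)])‖ = (n : ℝ)⁻¹ := by
  intro n
  induction n using Nat.recOnMul with
  | zero => intro h; exact absurd rfl h
  | one => intro _; simp
  | prime q hq =>
    intro _
    have hq' : q.Prime := hq
    have : Fact q.Prime := ⟨hq'⟩
    refine (finprod_eq_single _ (⟨q, hq'⟩ : Nat.Primes) ?_).trans ?_
    · intro p hp
      apply norm_nat_eq_one_of_not_dvd
      intro hdvd
      exact hp (Subtype.ext ((Nat.prime_dvd_prime_iff_eq p.2 hq').1 hdvd))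
    · exact Padic.norm_p (p := q)
  | mul a b iha ihb =>
    intro hab
    have ha : a ≠ 0 := fun h => hab (by simp [h])
    have hb : b ≠ 0 := fun h => hab (by simp [h])
    have : (fun p : Nat.Primes => ‖((a * b : ℕ) : ℚ_[(p : ℕ)])‖)
        = fun p : Nat.Primes => ‖(a : ℚ_[(p : ℕ)])‖ * ‖(b : ℚ_[(p : ℕ)])‖ := by
      funext p
      push_cast
      exact norm_mul _ _
    rw [this, finprod_mul_distrib (mulSupport_finite a ha) (mulSupport_finite b hb),
      iha ha, ihb hb]
    push_cast
    rw [mul_inv]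


lemma norm_nat_ne_zero (p : Nat.Primes) (n : ℕ+) : ‖((n : ℕ) : ℚ_[(p : ℕ)])‖ ≠ 0 := by
  rw [norm_ne_zero_iff]
  exact_mod_cast n.ne_zero

def natIdele (n : ℕ+) : FiniteIdeles :=
  ⟨fun p => Units.mk0 ((n : ℕ) : ℚ_[(p : ℕ)]) (by exact_mod_cast n.ne_zero), by
    show {p : Nat.Primes | ‖((n : ℕ) : ℚ_[(p : ℕ)])‖ ≠ 1}.Finite
    exact (mulSupport_finite (n : ℕ) n.ne_zero)⟩

lemma natIdele_coe (n : ℕ+) (p : Nat.Primes) :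
    (((natIdele n : FiniteIdeles) : IdeleComponents) p : ℚ_[(p : ℕ)]) = ((n : ℕ) : ℚ_[(p : ℕ)]) :=
  rfl

def coset (n : ℕ+) : Set FiniteIdeles :=
  {x | ∀ p : Nat.Primes, ‖((x : IdeleComponents) p : ℚ_[(p : ℕ)])‖
    = ‖((n : ℕ) : ℚ_[(p : ℕ)])‖}

lemma coset_eq_preimage (n : ℕ+) :
    coset n = (fun x => (natIdele n)⁻¹ * x) ⁻¹' zHatUnits := by
  ext x
  have key : ∀ p : Nat.Primes,
      ‖((((natIdele n)⁻¹ * x : FiniteIdeles) : IdeleComponents) p : ℚ_[(p : ℕ)])‖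
        = ‖((n : ℕ) : ℚ_[(p : ℕ)])‖⁻¹ * ‖((x : IdeleComponents) p : ℚ_[(p : ℕ)])‖ := by
    intro p
    have h0 : ((((natIdele n)⁻¹ * x : FiniteIdeles) : IdeleComponents) p : ℚ_[(p : ℕ)])
        = ((n : ℕ) : ℚ_[(p : ℕ)])⁻¹ * ((x : IdeleComponents) p : ℚ_[(p : ℕ)]) := rfl
    rw [h0, norm_mul, norm_inv]
  constructor
  · intro hx
    show ∀ p : Nat.Primes, _
    intro p
    rw [key p, hx p, inv_mul_cancel₀ (norm_nat_ne_zero p n)]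
  · intro hx p
    have h1 := hx p
    rw [key p] at h1
    exact ((inv_mul_eq_one₀ (norm_nat_ne_zero p n)).1 h1).symm

lemma coset_integral {n : ℕ+} {x : FiniteIdeles} (hx : x ∈ coset n) : IsIntegralIdele x :=
  fun p => (hx p) ▸ norm_nat_le_one p n

lemma fnorm_coset {n : ℕ+} {x : FiniteIdeles} (hx : x ∈ coset n) :
    fnorm x = ((n : ℕ) : ℝ)⁻¹ := by
  rw [fnorm, finprod_congr hx, finprod_norm _ n.ne_zero]

lemma coset_unique {m n : ℕ+} {x : FiniteIdeles} (hm : x ∈ coset m) (hn : x ∈ coset n) :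
    m = n := by
  have h1 : ((m : ℕ) : ℝ)⁻¹ = ((n : ℕ) : ℝ)⁻¹ := by
    rw [← finprod_norm _ m.ne_zero, ← finprod_norm _ n.ne_zero]
    exact finprod_congr fun p => (hm p).symm.trans (hn p)
  have h2 : ((m : ℕ) : ℝ) = ((n : ℕ) : ℝ) := inv_injective h1
  exact PNat.coe_injective (Nat.cast_injective h2)

lemma exists_coset (x : FiniteIdeles) (hx : IsIntegralIdele x) :
    ∃ n : ℕ+, x ∈ coset n := by
  have hfin : {p : Nat.Primes | ‖((x : IdeleComponents) p : ℚ_[(p : ℕ)])‖ ≠ 1}.Finite := x.2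
  set T := hfin.toFinset with hT
  set e : Nat.Primes → ℕ :=
    fun p => (((x : IdeleComponents) p : ℚ_[(p : ℕ)]).valuation).toNat with he
  have hNpos : 0 < ∏ p ∈ T, (p : ℕ) ^ e p :=
    Finset.prod_pos (fun p _ => pow_pos p.2.pos _)
  refine ⟨⟨_, hNpos⟩, ?_⟩
  intro q
  have h1 : ‖(((∏ p ∈ T, (p : ℕ) ^ e p : ℕ)) : ℚ_[(q : ℕ)])‖
      = ∏ p ∈ T, ‖((p : ℕ) : ℚ_[(q : ℕ)])‖ ^ e p := by
    push_cast
    rw [norm_prod]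
    simp [norm_pow]
  show ‖((x : IdeleComponents) q : ℚ_[(q : ℕ)])‖
      = ‖(((∏ p ∈ T, (p : ℕ) ^ e p : ℕ)) : ℚ_[(q : ℕ)])‖
  rw [h1]
  by_cases hq : q ∈ T
  · rw [Finset.prod_eq_single_of_mem q hq (fun p _ hne => by
      rw [norm_nat_eq_one_of_not_dvd (p := q) (n := (p : ℕ)) (fun hd =>
        hne (Subtype.ext ((Nat.prime_dvd_prime_iff_eq q.2 p.2).1 hd).symm)), one_pow])]
    have hne : ((x : IdeleComponents) q : ℚ_[(q : ℕ)]) ≠ 0 := Units.ne_zero _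
    rw [Padic.norm_p (p := (q : ℕ)), Padic.norm_eq_zpow_neg_valuation hne]
    have hv : 0 ≤ (((x : IdeleComponents) q : ℚ_[(q : ℕ)])).valuation :=
      (Padic.norm_le_one_iff_val_nonneg _).1 (hx q)
    rw [← Int.toNat_of_nonneg hv, zpow_neg, zpow_natCast, inv_pow]
  · have hxq : ‖((x : IdeleComponents) q : ℚ_[(q : ℕ)])‖ = 1 := by
      by_contra h
      exact hq (hfin.mem_toFinset.2 h)
    rw [hxq, Finset.prod_eq_one]
    intro p hp
    rw [norm_nat_eq_one_of_not_dvd (p := q) (n := (p : ℕ)) (fun hd => ?_), one_pow]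
    exact hq ((Subtype.ext ((Nat.prime_dvd_prime_iff_eq q.2 p.2).1 hd).symm : p = q) ▸ hp)

lemma cpow_inv_nat (n : ℕ+) (s : ℂ) :
    ((((n : ℕ) : ℝ)⁻¹ : ℝ) : ℂ) ^ s = (((n : ℕ) : ℂ)) ^ (-s) := by
  have h : (((n : ℕ) : ℂ)).arg ≠ Real.pi := by
    rw [Complex.natCast_arg]
    exact Real.pi_ne_zero.symm
  rw [Complex.ofReal_inv, Complex.ofReal_natCast, Complex.inv_cpow _ _ h, ← Complex.cpow_neg]


end AdelicAux

open AdelicAux in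
open scoped ENNReal NNReal in
/-- Let `F, G` be cusp forms of even positive weights `k, l` for
`SL₂(ℤ)` with Fourier coefficients `(a_n), (b_n)`, and let `f, g : 𝔸_f^× → ℂ` take
the value `a_n` (resp. `b_n`) on the coset `n·Ẑ^× = {x | ∀ p, |x_p|_p = |n|_p}` and
`0` on non-integral ideles.  Let `μ` be a translation-invariant measure on the
finite ideles with `μ(Ẑ^×) = 1` (with `Ẑ^×` and the idele norm measurable, as for a
Borel measure on the idele topology).  For `Re s₁ > k` and `Re s₂ > l`, the
iterated adelic integral of `f(x)|x|_f^{s₁} g(y)|y|_f^{s₂}` over `|x|_f > |y|_f`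
equals the double `L`-function
`L(F,G,s₁,s₂) = ∑_{0 < n₁ < n₂} a_{n₁} b_{n₂} n₁^{-s₁} n₂^{-s₂}`. -/
theorem adelic_double_L_function (k l : ℤ) (hk : Even k) (hk0 : 0 < k)
    (hl : Even l) (hl0 : 0 < l)
    (F : CuspForm (CongruenceSubgroup.Gamma 1) k)
    (G : CuspForm (CongruenceSubgroup.Gamma 1) l)
    (a b : ℕ+ → ℂ)
    (hFa : ∀ z : UpperHalfPlane, F z =
      ∑' n : ℕ+, a n * Complex.exp (2 * Real.pi * Complex.I * (n : ℕ) * (z : ℂ)))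
    (hGb : ∀ z : UpperHalfPlane, G z =
      ∑' n : ℕ+, b n * Complex.exp (2 * Real.pi * Complex.I * (n : ℕ) * (z : ℂ)))
    (f g : FiniteIdeles → ℂ)
    (hf : ∀ (n : ℕ+) (x : FiniteIdeles),
      (∀ p : Nat.Primes, ‖((x : IdeleComponents) p : ℚ_[(p : ℕ)])‖
        = ‖((n : ℕ) : ℚ_[(p : ℕ)])‖) → f x = a n)
    (hf0 : ∀ x : FiniteIdeles, ¬ IsIntegralIdele x → f x = 0)
    (hg : ∀ (n : ℕ+) (x : FiniteIdeles),
      (∀ p : Nat.Primes, ‖((x : IdeleComponents) p : ℚ_[(p : ℕ)])‖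
        = ‖((n : ℕ) : ℚ_[(p : ℕ)])‖) → g x = b n)
    (hg0 : ∀ x : FiniteIdeles, ¬ IsIntegralIdele x → g x = 0)
    [MeasurableSpace FiniteIdeles] (μ : Measure FiniteIdeles) [SFinite μ]
    (hinv : ∀ a : FiniteIdeles, MeasurePreserving (fun x => a * x) μ μ)
    (hnorm : Measurable fnorm) (hZmeas : MeasurableSet zHatUnits)
    (hZ : μ zHatUnits = 1)
    (s₁ s₂ : ℂ) (h₁ : (k : ℝ) < s₁.re) (h₂ : (l : ℝ) < s₂.re) :
    ∫ z in {q : FiniteIdeles × FiniteIdeles | fnorm q.2 < fnorm q.1},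
      f z.1 * (fnorm z.1 : ℂ) ^ s₁ * g z.2 * (fnorm z.2 : ℂ) ^ s₂ ∂(μ.prod μ)
      = ∑' n : {m : ℕ+ × ℕ+ // m.1 < m.2},
          a (n : ℕ+ × ℕ+).1 * b (n : ℕ+ × ℕ+).2 *
            (((n : ℕ+ × ℕ+).1 : ℕ) : ℂ) ^ (-s₁) * (((n : ℕ+ × ℕ+).2 : ℕ) : ℂ) ^ (-s₂) := by
  classical
  set ν := μ.prod μ with hν
  set H : FiniteIdeles × FiniteIdeles → ℂ :=
    fun z => f z.1 * (fnorm z.1 : ℂ) ^ s₁ * g z.2 * (fnorm z.2 : ℂ) ^ s₂ with hH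
  set T : Set (FiniteIdeles × FiniteIdeles) := {q | fnorm q.2 < fnorm q.1} with hTdef
  have hT : MeasurableSet T :=
    measurableSet_lt (hnorm.comp measurable_snd) (hnorm.comp measurable_fst)
  have hCmeas : ∀ n : ℕ+, MeasurableSet (coset n) := fun n => by
    rw [coset_eq_preimage]
    exact (hinv _).measurable hZmeas
  have hCμ : ∀ n : ℕ+, μ (coset n) = 1 := fun n => by
    rw [coset_eq_preimage, (hinv _).measure_preimage hZmeas.nullMeasurableSet]
    exact hZ
  set c : {m : ℕ+ × ℕ+ // m.1 < m.2} → ℂ := fun i =>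
    a i.1.1 * ((i.1.1 : ℕ) : ℂ) ^ (-s₁) * (b i.1.2 * ((i.1.2 : ℕ) : ℂ) ^ (-s₂)) with hc
  set S : {m : ℕ+ × ℕ+ // m.1 < m.2} → Set (FiniteIdeles × FiniteIdeles) := fun i =>
    coset i.1.1 ×ˢ coset i.1.2 with hSdef
  set φ : {m : ℕ+ × ℕ+ // m.1 < m.2} → FiniteIdeles × FiniteIdeles → ℂ :=
    fun i => (S i).indicator (fun _ => c i) with hφ
  have key : ∀ z : FiniteIdeles × FiniteIdeles,
      (T.indicator H z = 0 ∧ ∀ i, φ i z = 0) ∨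
      (∃ i, T.indicator H z = c i ∧ φ i z = c i ∧ ∀ j, j ≠ i → φ j z = 0) := by
    intro z
    by_cases hx : ∃ n : ℕ+, z.1 ∈ coset n
    · by_cases hy : ∃ n : ℕ+, z.2 ∈ coset n
      · obtain ⟨n₁, hn₁⟩ := hx
        obtain ⟨n₂, hn₂⟩ := hy
        have hp1 : 0 < ((n₁ : ℕ) : ℝ) := by exact_mod_cast n₁.pos
        have hp2 : 0 < ((n₂ : ℕ) : ℝ) := by exact_mod_cast n₂.pos
        by_cases hlt : n₁ < n₂
        · right
          refine ⟨(⟨(n₁, n₂), hlt⟩ : {m : ℕ+ × ℕ+ // m.1 < m.2}), ?_, ?_, ?_⟩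
          · have hzT : z ∈ T := by
              show fnorm z.2 < fnorm z.1
              rw [fnorm_coset hn₁, fnorm_coset hn₂]
              exact inv_strictAnti₀ hp1 (by exact_mod_cast hlt)
            rw [Set.indicator_of_mem hzT]
            show f z.1 * (fnorm z.1 : ℂ) ^ s₁ * g z.2 * (fnorm z.2 : ℂ) ^ s₂ = _
            rw [hf n₁ z.1 hn₁, hg n₂ z.2 hn₂, fnorm_coset hn₁, fnorm_coset hn₂,
              cpow_inv_nat, cpow_inv_nat]
            ring
          · have hzS : z ∈ S (⟨(n₁, n₂), hlt⟩ : {m : ℕ+ × ℕ+ // m.1 < m.2}) := by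
              simp only [hSdef]
              exact Set.mem_prod.mpr ⟨hn₁, hn₂⟩
            exact Set.indicator_of_mem hzS _
          · intro j hj
            apply Set.indicator_of_notMem
            rintro ⟨hj1, hj2⟩
            exact hj (Subtype.ext
              (Prod.ext (coset_unique hj1 hn₁) (coset_unique hj2 hn₂)))
        · left
          constructor
          · apply Set.indicator_of_notMem
            show ¬ fnorm z.2 < fnorm z.1
            rw [fnorm_coset hn₁, fnorm_coset hn₂, not_lt]
            exact inv_anti₀ hp2 (by exact_mod_cast (not_lt.1 hlt))
          · intro i
            apply Set.indicator_of_notMem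
            rintro ⟨h1, h2⟩
            refine hlt ?_
            rw [← coset_unique h1 hn₁, ← coset_unique h2 hn₂]
            exact i.2
      · left
        have hgz : g z.2 = 0 := hg0 z.2 (fun hint => hy (exists_coset z.2 hint))
        refine ⟨?_, ?_⟩
        · by_cases hzT : z ∈ T
          · rw [Set.indicator_of_mem hzT]
            show f z.1 * (fnorm z.1 : ℂ) ^ s₁ * g z.2 * (fnorm z.2 : ℂ) ^ s₂ = 0
            rw [hgz]
            ring
          · exact Set.indicator_of_notMem hzT _
        · intro i
          apply Set.indicator_of_notMem
          rintro ⟨_, h2⟩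
          exact hy ⟨i.1.2, h2⟩
    · left
      have hfz : f z.1 = 0 := hf0 z.1 (fun hint => hx (exists_coset z.1 hint))
      refine ⟨?_, ?_⟩
      · by_cases hzT : z ∈ T
        · rw [Set.indicator_of_mem hzT]
          show f z.1 * (fnorm z.1 : ℂ) ^ s₁ * g z.2 * (fnorm z.2 : ℂ) ^ s₂ = 0
          rw [hfz]
          ring
        · exact Set.indicator_of_notMem hzT _
      · intro i
        apply Set.indicator_of_notMem
        rintro ⟨h1, _⟩
        exact hx ⟨i.1.1, h1⟩
  have hr : ∀ i : {m : ℕ+ × ℕ+ // m.1 < m.2},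
      a (i : ℕ+ × ℕ+).1 * b (i : ℕ+ × ℕ+).2 *
        (((i : ℕ+ × ℕ+).1 : ℕ) : ℂ) ^ (-s₁) * (((i : ℕ+ × ℕ+).2 : ℕ) : ℂ) ^ (-s₂) = c i :=
    fun i => by rw [hc]; ring
  have hpt : T.indicator H = fun z => ∑' i, φ i z := by
    funext z
    rcases key z with ⟨h0, hall⟩ | ⟨i, h1, h2, h3⟩
    · rw [h0]
      symm
      have : (fun i => φ i z) = fun _ => (0 : ℂ) := funext hall
      rw [this, tsum_zero]
    · rw [h1, tsum_eq_single i h3, h2]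
  have hSmeas : ∀ i, MeasurableSet (S i) := fun i => (hCmeas _).prod (hCmeas _)
  have hνS : ∀ i, ν (S i) = 1 := fun i => by
    rw [hν, hSdef, Measure.prod_prod, hCμ, hCμ, mul_one]
  have hφmeas : ∀ i, Measurable (φ i) := fun i =>
    measurable_const.indicator (hSmeas i)
  have hφlint : ∀ i, ∫⁻ z, ‖φ i z‖₊ ∂ν = (‖c i‖₊ : ℝ≥0∞) := fun i => by
    calc ∫⁻ z, ‖φ i z‖₊ ∂ν
        = ∫⁻ z, (S i).indicator (fun _ => (‖c i‖₊ : ℝ≥0∞)) z ∂ν := by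
          apply lintegral_congr
          intro z
          by_cases hz : z ∈ S i
          · simp only [hφ, Set.indicator_of_mem hz]
          · simp only [hφ, Set.indicator_of_notMem hz, nnnorm_zero, ENNReal.coe_zero]
      _ = ‖c i‖₊ * ν (S i) := lintegral_indicator_const (hSmeas i) _
      _ = (‖c i‖₊ : ℝ≥0∞) := by rw [hνS i, mul_one]
  have hlint : ∫⁻ z, ‖T.indicator H z‖₊ ∂ν = ∑' i, (‖c i‖₊ : ℝ≥0∞) := by
    have hpt2 : ∀ z, (‖T.indicator H z‖₊ : ℝ≥0∞) = ∑' i, (‖φ i z‖₊ : ℝ≥0∞) := by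
      intro z
      rcases key z with ⟨h0, hall⟩ | ⟨i, h1, h2, h3⟩
      · rw [h0]
        symm
        have : (fun i => (‖φ i z‖₊ : ℝ≥0∞)) = fun _ => (0 : ℝ≥0∞) :=
          funext fun i => by rw [hall i]; simp
        rw [this, tsum_zero]
        simp
      · rw [h1, tsum_eq_single i (fun j hj => by rw [h3 j hj]; simp), h2]
    calc ∫⁻ z, ‖T.indicator H z‖₊ ∂ν
        = ∫⁻ z, ∑' i, (‖φ i z‖₊ : ℝ≥0∞) ∂ν := lintegral_congr hpt2
      _ = ∑' i, ∫⁻ z, (‖φ i z‖₊ : ℝ≥0∞) ∂ν :=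
          lintegral_tsum (fun i => (hφmeas i).enorm.aemeasurable)
      _ = ∑' i, (‖c i‖₊ : ℝ≥0∞) := tsum_congr hφlint
  rw [← integral_indicator hT]
  by_cases hfin : ∑' i, (‖c i‖₊ : ℝ≥0∞) = ⊤
  · have hni : ¬ Integrable (T.indicator H) ν := by
      intro hInt
      have h2 := hInt.2
      rw [HasFiniteIntegral] at h2
      change ∫⁻ z, (‖T.indicator H z‖₊ : ℝ≥0∞) ∂ν < ⊤ at h2
      rw [hlint, hfin] at h2
      exact (lt_irrefl _) h2
    rw [integral_undef hni]
    symm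
    apply tsum_eq_zero_of_not_summable
    intro hsum
    have hsum' : Summable c := by
      have := funext hr
      rwa [this] at hsum
    have hsub : Summable (fun i => ‖c i‖₊) := by
      apply NNReal.summable_coe.1
      have : (fun i => (‖c i‖₊ : ℝ)) = fun i => ‖c i‖ := funext fun i => coe_nnnorm _
      rw [this]
      exact summable_norm_iff.2 hsum'
    exact ENNReal.tsum_coe_ne_top_iff_summable.2 hsub hfin
  · rw [hpt, integral_tsum (fun i => (hφmeas i).aestronglyMeasurable)
      (by rw [show (∑' i, ∫⁻ a, ‖φ i a‖ₑ ∂ν) = ∑' i, (‖c i‖₊ : ℝ≥0∞) from tsum_congr hφlint]; exact hfin)]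
    have hint : ∀ i, ∫ z, φ i z ∂ν = c i := fun i => by
      simp only [hφ]
      rw [integral_indicator_const (c i) (hSmeas i), measureReal_def, hνS i]
      simp
    rw [tsum_congr hint]
    exact (tsum_congr fun i => (hr i)).symm


end
end

section
/- Let k₁, …, k_d be positive integers with k_d > 1, and set n = k₁ + ⋯ + k_d. Then ζ(k₁,…,k_d) = ∫⋯∫_{{0 < x₁ < x₂ < ⋯ < x_n < 1}} ∏_{i=1}^n ω_i(x_i) dx₁ ⋯ dx_n, where ω_i(x) = 1/(1-x) if i ∈ {1, k₁+1, k₁+k₂+1, …, k₁+⋯+k_{d-1}+1} and ω_i(x) = 1/x otherwise. -/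
open MeasureTheory Finset
open scoped Classical


/-- membership of a snoc in the simplex -/
lemma mzv_snoc_mem (n : ℕ) (c t : ℝ) (y : Fin n → ℝ) :
    (StrictMono (Fin.snoc y t : Fin (n+1) → ℝ) ∧ ∀ i, (Fin.snoc y t : Fin (n+1) → ℝ) i ∈ Set.Ioo 0 c) ↔
      (t ∈ Set.Ioo 0 c ∧ (StrictMono y ∧ ∀ i, y i ∈ Set.Ioo 0 t)) := by
  constructor
  · rintro ⟨hsm, hmem⟩
    have ht : t ∈ Set.Ioo 0 c := by
      have := hmem (Fin.last n); simpa using this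
    refine ⟨ht, ?_, ?_⟩
    · intro a b hab
      have := hsm (show (a.castSucc : Fin (n+1)) < b.castSucc by simpa using hab)
      simpa using this
    · intro i
      have h0 : (0:ℝ) < y i := by have := hmem i.castSucc; simpa using this.1
      have hlt : y i < t := by
        have := hsm (show (i.castSucc : Fin (n+1)) < Fin.last n from Fin.castSucc_lt_last i)
        simpa using this
      exact ⟨h0, hlt⟩
  · rintro ⟨ht, hsm, hmem⟩
    constructor
    · rw [Fin.strictMono_iff_lt_succ]
      intro i
      rcases eq_or_lt_of_le (Fin.le_last i.succ) with h | h
      · rw [h]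
        simp only [Fin.snoc_last, Fin.snoc_castSucc]
        exact (hmem i).2
      · have hi : i.succ ≠ Fin.last n := ne_of_lt h
        obtain ⟨j, hj⟩ := Fin.exists_castSucc_eq.mpr hi
        rw [← hj]
        simp only [Fin.snoc_castSucc]
        have : i.castSucc < j.castSucc := by rw [hj]; exact (Fin.castSucc_lt_succ : i.castSucc < i.succ)
        have hij : i < j := by simpa using this
        exact hsm hij
    · intro i
      rcases eq_or_lt_of_le (Fin.le_last i) with h | h
      · rw [h]; simpa using ht
      · obtain ⟨j, hj⟩ := Fin.exists_castSucc_eq.mpr (ne_of_lt h)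
        rw [← hj]; simp only [Fin.snoc_castSucc]
        exact ⟨(hmem j).1, lt_trans (hmem j).2 ht.2⟩

lemma mzv_measurableSet_simplex (n : ℕ) (c : ℝ) :
    MeasurableSet {x : Fin n → ℝ | StrictMono x ∧ ∀ i, x i ∈ Set.Ioo 0 c} := by
  have h1 : {x : Fin n → ℝ | StrictMono x ∧ ∀ i, x i ∈ Set.Ioo 0 c} =
      (⋂ (i : Fin n) (j : Fin n) (_ : i < j), {x : Fin n → ℝ | x i < x j}) ∩
      (⋂ i : Fin n, {x | x i ∈ Set.Ioo 0 c}) := by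
    ext x
    simp only [Set.mem_setOf_eq, Set.mem_inter_iff, Set.mem_iInter]
    constructor
    · rintro ⟨hs, hm⟩; exact ⟨fun i j hij => hs hij, hm⟩
    · rintro ⟨hs, hm⟩; exact ⟨fun i j hij => hs i j hij, hm⟩
  rw [h1]
  refine MeasurableSet.inter ?_ ?_
  · refine MeasurableSet.iInter fun i => MeasurableSet.iInter fun j => MeasurableSet.iInter fun _ => ?_
    exact measurableSet_lt (measurable_pi_apply i) (measurable_pi_apply j)
  · exact MeasurableSet.iInter fun i => (measurable_pi_apply i) measurableSet_Ioo

lemma mzv_measurable_zpow (e : ℤ) : Measurable fun x : ℝ => x ^ e := by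
  rcases e with a | a
  · simpa using (measurable_id.pow_const a)
  · have : Measurable fun x : ℝ => (x ^ (a+1))⁻¹ :=
      measurable_inv.comp (measurable_id.pow_const (a+1))
    simpa [zpow_negSucc] using this


/-- block decomposition of a product over a range of a sum -/
lemma mzv_prod_blocks {M : Type*} [CommMonoid M] (K : ℕ → ℕ) (g : ℕ → M) (c : ℕ) :
    ∏ i ∈ range (∑ j ∈ range c, K j), g i
      = ∏ j ∈ range c, ∏ r ∈ range (K j), g ((∑ l ∈ range j, K l) + r) := by
  induction c with
  | zero => simp
  | succ c ih =>
    rw [Finset.sum_range_succ, Finset.prod_range_add, ih, Finset.prod_range_succ]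

lemma mzv_sum_blocks {M : Type*} [AddCommMonoid M] (K : ℕ → ℕ) (g : ℕ → M) (c : ℕ) :
    ∑ i ∈ range (∑ j ∈ range c, K j), g i
      = ∑ j ∈ range c, ∑ r ∈ range (K j), g ((∑ l ∈ range j, K l) + r) := by
  induction c with
  | zero => simp
  | succ c ih =>
    rw [Finset.sum_range_succ, Finset.sum_range_add, ih, Finset.sum_range_succ]

/-- finite product of tsums in ℝ≥0∞ -/
lemma mzv_prod_tsum (q : ℕ) (f : Fin q → ℕ → ENNReal) :
    ∏ j, ∑' m : ℕ, f j m = ∑' m : Fin q → ℕ, ∏ j, f j (m j) := by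
  induction q with
  | zero =>
    haveI : Unique (Fin 0 → ℕ) := Pi.uniqueOfIsEmpty _
    have h1 : ∑' (_ : Fin 0 → ℕ), (1:ENNReal) = 1 :=
      tsum_eq_single default (fun b hb => absurd (Subsingleton.elim b _) hb)
    simpa using h1.symm
  | succ q ih =>
    rw [Fin.prod_univ_succ, ih (fun j => f j.succ),
      ← Equiv.tsum_eq (Fin.consEquiv (fun _ : Fin (q+1) => ℕ)) (fun m => ∏ j, f j (m j)),
      ENNReal.tsum_prod']
    simp only [Fin.consEquiv, Equiv.coe_fn_mk, Fin.prod_univ_succ, Fin.cons_zero, Fin.cons_succ]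
    simp only [ENNReal.tsum_mul_left, ENNReal.tsum_mul_right]

lemma mzv_geom (x : ℝ) (hx : x ∈ Set.Ioo (0:ℝ) 1) :
    ENNReal.ofReal (1 - x)⁻¹ = ∑' m : ℕ, ENNReal.ofReal (x ^ m) := by
  rw [← tsum_geometric_of_lt_one (le_of_lt hx.1) hx.2]
  exact ENNReal.ofReal_tsum_of_nonneg (fun m => pow_nonneg (le_of_lt hx.1) m)
    (summable_geometric_of_lt_one (le_of_lt hx.1) hx.2)

/-- ∫⁻ over Ioo 0 c of t^a -/
lemma mzv_lintegral_pow (a : ℕ) (c : ℝ) (hc : 0 < c) :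
    ∫⁻ t in Set.Ioo (0:ℝ) c, ENNReal.ofReal (t ^ a)
      = ENNReal.ofReal (c ^ (a+1)) * (ENNReal.ofReal (a+1))⁻¹ := by
  have hint : IntegrableOn (fun t : ℝ => t ^ a) (Set.Ioo 0 c) volume := by
    exact ((continuous_pow a).continuousOn.integrableOn_compact isCompact_Icc).mono_set
      Set.Ioo_subset_Icc_self
  rw [← ofReal_integral_eq_lintegral_ofReal hint]
  · have : ∫ t in Set.Ioo (0:ℝ) c, t ^ a = c ^ (a+1) / (a+1) := by
      rw [Measure.restrict_congr_set Ioo_ae_eq_Ioc, ← intervalIntegral.integral_of_le (le_of_lt hc),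
        integral_pow]
      simp
    rw [this, div_eq_mul_inv, ENNReal.ofReal_mul (by positivity)]
    congr 1
    rw [ENNReal.ofReal_inv_of_pos (by positivity)]
  · filter_upwards [self_mem_ae_restrict measurableSet_Ioo] with t ht
    exact pow_nonneg (le_of_lt ht.1) a


section
variable (d : ℕ) (k : Fin (d + 1) → ℕ)

/-- extension of `k` to ℕ -/
def mzvK : ℕ → ℕ := fun j => if h : j < d+1 then k ⟨j, h⟩ else 0
/-- partial sums of `k` -/
def mzvS : ℕ → ℕ := fun c => ∑ l ∈ range c, mzvK d k l
/-- extension of a multi-index to ℕ -/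
def mzvM (m : Fin (d + 1) → ℕ) : ℕ → ℕ := fun j => if h : j < d+1 then m ⟨j, h⟩ else 0
/-- partial sums of the shifted multi-index -/
def mzvN (m : Fin (d + 1) → ℕ) : ℕ → ℕ := fun j => ∑ l ∈ range (j+1), (mzvM d m l + 1)
/-- the exponent pattern -/
noncomputable def mzvE (m : Fin (d + 1) → ℕ) : ℕ → ℤ := fun i =>
  if h : ∃ j : Fin (d+1), i = mzvS d k j.val then (mzvM d m h.choose.val : ℤ) else -1

variable {d k}

lemma mzvK_pos (hk : ∀ i, 0 < k i) {j : ℕ} (hj : j < d+1) : 0 < mzvK d k j := by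
  rw [mzvK, dif_pos hj]; exact hk _

lemma mzvK_eq (j : Fin (d+1)) : mzvK d k j.val = k j := by
  rw [mzvK, dif_pos j.isLt]

lemma mzvM_eq (m : Fin (d+1) → ℕ) (j : Fin (d+1)) : mzvM d m j.val = m j := by
  rw [mzvM, dif_pos j.isLt]

lemma mzvS_mono (hk : ∀ i, 0 < k i) {j1 j2 : ℕ} (h12 : j1 < j2) (h2 : j2 ≤ d+1) :
    mzvS d k j1 < mzvS d k j2 := by
  have h1 : mzvS d k j1 + mzvK d k j1 = mzvS d k (j1+1) := (Finset.sum_range_succ _ _).symm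
  have h2' : mzvS d k (j1+1) ≤ mzvS d k j2 := by
    apply Finset.sum_le_sum_of_subset
    exact Finset.range_subset_range.mpr (by omega)
  have h3 : 0 < mzvK d k j1 := mzvK_pos hk (by omega)
  omega

lemma mzvS_inj (hk : ∀ i, 0 < k i) {j1 j2 : Fin (d+1)}
    (h : mzvS d k j1.val = mzvS d k j2.val) : j1 = j2 := by
  by_contra hne
  rcases lt_or_gt_of_ne (fun h' => hne (Fin.ext h')) with h' | h'
  · exact absurd h (ne_of_lt (mzvS_mono hk h' (by omega)))
  · exact absurd h.symm (ne_of_lt (mzvS_mono hk h' (by omega)))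

lemma mzv_no_start (hk : ∀ i, 0 < k i) {j r : ℕ} (hj : j < d+1) (hr0 : 0 < r)
    (hr : r < mzvK d k j) : ¬ ∃ j' : Fin (d+1), mzvS d k j + r = mzvS d k j'.val := by
  rintro ⟨j', hj'⟩
  rcases le_or_gt j'.val j with h | h
  · have : mzvS d k j'.val ≤ mzvS d k j := by
      rcases eq_or_lt_of_le h with h' | h'
      · rw [h']
      · exact le_of_lt (mzvS_mono hk h' (by omega))
    omega
  · have h1 : mzvS d k (j+1) ≤ mzvS d k j'.val := by
      rcases eq_or_lt_of_le (show j+1 ≤ j'.val by omega) with h' | h'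
      · rw [h']
      · exact le_of_lt (mzvS_mono hk h' (by omega))
    have h2 : mzvS d k (j+1) = mzvS d k j + mzvK d k j := Finset.sum_range_succ _ _
    omega

lemma mzvE_start (hk : ∀ i, 0 < k i) (m : Fin (d+1) → ℕ) (j : Fin (d+1)) :
    mzvE d k m (mzvS d k j.val) = (m j : ℤ) := by
  have h : ∃ j' : Fin (d+1), mzvS d k j.val = mzvS d k j'.val := ⟨j, rfl⟩
  rw [mzvE, dif_pos h]
  have hspec := h.choose_spec
  have : h.choose = j := mzvS_inj hk hspec.symm
  rw [this, mzvM_eq]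

lemma mzvE_nonstart (hk : ∀ i, 0 < k i) (m : Fin (d+1) → ℕ) {j r : ℕ} (hj : j < d+1)
    (hr0 : 0 < r) (hr : r < mzvK d k j) : mzvE d k m (mzvS d k j + r) = -1 := by
  rw [mzvE, dif_neg (mzv_no_start hk hj hr0 hr)]

lemma mzv_pos_lt (hk : ∀ i, 0 < k i) {j r : ℕ} (hj : j < d+1) (hr : r < mzvK d k j) :
    mzvS d k j + r < mzvS d k (d+1) := by
  have h2 : mzvS d k (j+1) = mzvS d k j + mzvK d k j := Finset.sum_range_succ _ _
  have h3 : mzvS d k (j+1) ≤ mzvS d k (d+1) := by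
    rcases eq_or_lt_of_le (show j+1 ≤ d+1 by omega) with h' | h'
    · rw [h']
    · exact le_of_lt (mzvS_mono hk h' (by omega))
  omega

lemma mzv_decomp (hk : ∀ i, 0 < k i) :
    ∀ c i, i < mzvS d k c → ∃ j < c, ∃ r < mzvK d k j, i = mzvS d k j + r := by
  intro c
  induction c with
  | zero => intro i hi; simp [mzvS] at hi
  | succ c ih =>
    intro i hi
    rcases lt_or_ge i (mzvS d k c) with h | h
    · obtain ⟨j, hj, r, hr, hir⟩ := ih i h
      exact ⟨j, by omega, r, hr, hir⟩
    · refine ⟨c, by omega, i - mzvS d k c, ?_, by omega⟩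
      have h2 : mzvS d k (c+1) = mzvS d k c + mzvK d k c := Finset.sum_range_succ _ _
      omega

/-- the key partial sum computation -/
lemma mzv_partial_sum (hk : ∀ i, 0 < k i) (m : Fin (d+1) → ℕ) {j r : ℕ} (hj : j < d+1)
    (hr : r < mzvK d k j) :
    ((mzvS d k j + r : ℕ) : ℤ) + 1 + ∑ l ∈ range (mzvS d k j + r + 1), mzvE d k m l
      = (mzvN d m j : ℤ) := by
  have key : ∀ i : ℕ, ((i : ℤ) + 1) + ∑ l ∈ range (i+1), mzvE d k m l
      = ∑ l ∈ range (i+1), (mzvE d k m l + 1) := by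
    intro i
    rw [Finset.sum_add_distrib]
    simp [add_comm]
  rw [key]
  -- split the range
  have hsplit : mzvS d k j + r + 1 = mzvS d k j + (r + 1) := by omega
  rw [hsplit, Finset.sum_range_add]
  -- first part: blocks
  have hblock : ∑ l ∈ range (mzvS d k j), (mzvE d k m l + 1)
      = ∑ j' ∈ range j, ((mzvM d m j' : ℤ) + 1) := by
    have h0 : mzvS d k j = ∑ l ∈ range j, mzvK d k l := rfl
    rw [h0, mzv_sum_blocks (mzvK d k) (fun l => mzvE d k m l + 1) j]
    have hSdef : ∀ j' : ℕ, ∑ l ∈ range j', mzvK d k l = mzvS d k j' := fun _ => rfl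
    simp only [hSdef]
    apply Finset.sum_congr rfl
    intro j' hj'
    have hj'lt : j' < d+1 := by
      have := Finset.mem_range.mp hj'; omega
    obtain ⟨kj, hkj⟩ : ∃ kj, mzvK d k j' = kj + 1 :=
      ⟨mzvK d k j' - 1, by have := mzvK_pos hk hj'lt; omega⟩
    rw [hkj, Finset.sum_range_succ']
    have hz : ∀ r' ∈ range kj, mzvE d k m (mzvS d k j' + (r' + 1)) + 1 = 0 := by
      intro r' hr'
      rw [mzvE_nonstart hk m hj'lt (by omega) (by rw [hkj]; have := Finset.mem_range.mp hr'; omega)]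
      ring
    rw [Finset.sum_congr rfl hz, Finset.sum_const, smul_zero, zero_add, add_zero]
    have hst := mzvE_start hk m ⟨j', hj'lt⟩
    simp only [Fin.val_mk] at hst
    rw [hst]
    simp [mzvM, dif_pos hj'lt]; omega
  rw [hblock]
  -- second part
  have hsecond : ∑ r' ∈ range (r+1), (mzvE d k m (mzvS d k j + r') + 1)
      = (mzvM d m j : ℤ) + 1 := by
    rw [Finset.sum_range_succ']
    have hz : ∀ r' ∈ range r, mzvE d k m (mzvS d k j + (r' + 1)) + 1 = 0 := by
      intro r' hr'
      rw [mzvE_nonstart hk m hj (by omega) (by have := Finset.mem_range.mp hr'; omega)]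
      ring
    rw [Finset.sum_congr rfl hz, Finset.sum_const, smul_zero, zero_add]
    have hst := mzvE_start hk m ⟨j, hj⟩
    simp only [Fin.val_mk] at hst
    rw [add_zero, hst]
    simp [mzvM, dif_pos hj]; omega
  rw [hsecond]
  rw [mzvN, Finset.sum_range_succ]
  push_cast
  ring

end



section
variable {d : ℕ}

lemma mzvN_pos (m : Fin (d+1) → ℕ) (j : ℕ) : 0 < mzvN d m j := by
  rw [mzvN]
  apply Finset.sum_pos (fun l _ => by omega)
  exact ⟨0, Finset.mem_range.mpr (by omega)⟩

lemma mzvN_strictMono (m : Fin (d+1) → ℕ) : StrictMono (mzvN d m) := by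
  apply strictMono_nat_of_lt_succ
  intro j
  rw [mzvN, mzvN, Finset.sum_range_succ (f := fun l => mzvM d m l + 1) (n := j+1)]
  omega

lemma mzvN_rec (m : Fin (d+1) → ℕ) (j : ℕ) :
    mzvN d m (j+1) = mzvN d m j + (mzvM d m (j+1) + 1) := Finset.sum_range_succ _ _

lemma mzvN_zero (m : Fin (d+1) → ℕ) : mzvN d m 0 = mzvM d m 0 + 1 := by
  rw [mzvN, Finset.sum_range_one]

/-- the reindexing bijection -/
noncomputable def mzvPhi (d : ℕ) :
    (Fin (d+1) → ℕ) ≃ {g : Fin (d + 1) → ℕ // StrictMono g ∧ ∀ i, 0 < g i} := by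
  apply Equiv.ofBijective (f := fun m =>
    ⟨fun j => mzvN d m j.val, fun a b hab => mzvN_strictMono m hab, fun j => mzvN_pos m j.val⟩)
  constructor
  · intro m1 m2 h
    have hN : ∀ j : Fin (d+1), mzvN d m1 j.val = mzvN d m2 j.val :=
      fun j => congrFun (congrArg Subtype.val h) j
    funext j
    rcases j with ⟨jv, hjv⟩
    induction jv with
    | zero =>
      have := hN ⟨0, hjv⟩
      rw [mzvN_zero, mzvN_zero] at this
      simpa [mzvM, dif_pos hjv] using this
    | succ v _ =>
      have h1 := hN ⟨v+1, hjv⟩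
      have h2 := hN ⟨v, by omega⟩
      simp only [Fin.val_mk] at h1 h2
      rw [mzvN_rec, mzvN_rec, h2] at h1
      have hMM : mzvM d m1 (v+1) = mzvM d m2 (v+1) := by omega
      rw [mzvM, mzvM, dif_pos hjv, dif_pos hjv] at hMM
      exact hMM
  · rintro ⟨g, hgs, hgp⟩
    set m : Fin (d+1) → ℕ := fun j =>
      if h0 : j.val = 0 then g j - 1 else g j - g ⟨j.val - 1, by omega⟩ - 1 with hm
    refine ⟨m, ?_⟩
    apply Subtype.ext
    funext j
    simp only
    -- show mzvN d m j.val = g j by induction on j.val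
    have key : ∀ jv (h : jv < d+1), mzvN d m jv = g ⟨jv, h⟩ := by
      intro jv
      induction jv with
      | zero =>
        intro h
        rw [mzvN_zero]
        have hM : mzvM d m 0 = g ⟨0, h⟩ - 1 := by
          simp [mzvM, dif_pos h, hm]
        have := hgp ⟨0, h⟩
        omega
      | succ v ih =>
        intro h
        rw [mzvN_rec, ih (by omega)]
        have hM : mzvM d m (v+1) = g ⟨v+1, h⟩ - g ⟨v, by omega⟩ - 1 := by
          simp only [hm, mzvM, dif_pos h]
          rw [dif_neg (by simp)]
          rfl
        have hlt : g ⟨v, by omega⟩ < g ⟨v+1, h⟩ := hgs (by simp [Fin.lt_def])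
        omega
    rw [key j.val j.isLt]
end



lemma mzv_measurable_monomial (n : ℕ) (e : ℕ → ℤ) :
    Measurable fun x : Fin n → ℝ => ∏ i : Fin n, ENNReal.ofReal (x i ^ (e i.val)) := by
  apply Finset.measurable_prod
  intro i _
  exact ((mzv_measurable_zpow (e i.val)).comp (measurable_pi_apply i)).ennreal_ofReal

lemma mzv_monomial (n : ℕ) (e : ℕ → ℤ)
    (hB : ∀ i < n, 0 < (i + 1 : ℤ) + ∑ l ∈ range (i+1), e l) :
    ∀ c : ℝ, 0 < c →
    ∫⁻ x in {x : Fin n → ℝ | StrictMono x ∧ ∀ i, x i ∈ Set.Ioo 0 c},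
        ∏ i : Fin n, ENNReal.ofReal (x i ^ (e i.val))
      = ENNReal.ofReal (c ^ ((n : ℤ) + ∑ l ∈ range n, e l).toNat) *
        ∏ i : Fin n, (ENNReal.ofReal (((i.val : ℤ) + 1 + ∑ l ∈ range (i.val+1), e l : ℤ) : ℝ))⁻¹ := by
  induction n with
  | zero =>
    intro c hc
    have hset : {x : Fin 0 → ℝ | StrictMono x ∧ ∀ i, x i ∈ Set.Ioo 0 c} = Set.univ := by
      ext x
      simp only [Set.mem_setOf_eq, Set.mem_univ, iff_true]
      exact ⟨fun a => a.elim0, fun i => i.elim0⟩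
    rw [hset]
    simp [Measure.restrict_univ, lintegral_const, MeasureTheory.volume_pi, Measure.pi_univ]
  | succ n ih =>
    intro c hc
    -- notation
    set A : ℤ := (n : ℤ) + ∑ l ∈ range n, e l with hA
    have hBn : 0 < (n + 1 : ℤ) + ∑ l ∈ range (n+1), e l := hB n (Nat.lt_succ_self n)
    have hena : 0 ≤ e n + A := by
      rw [Finset.sum_range_succ] at hBn; omega
    have hA0 : 0 ≤ A := by
      rcases Nat.eq_zero_or_pos n with h | h
      · simp [hA, h]
      · have := hB (n-1) (by omega)
        have hn1 : n - 1 + 1 = n := by omega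
        rw [hn1] at this
        omega
    set a : ℕ := (e n + A).toNat with ha
    have haz : (a : ℤ) = e n + A := Int.toNat_of_nonneg hena
    set C : ENNReal :=
      ∏ i : Fin n, (ENNReal.ofReal (((i.val : ℤ) + 1 + ∑ l ∈ range (i.val+1), e l : ℤ) : ℝ))⁻¹
      with hC
    set F : (Fin (n+1) → ℝ) → ENNReal :=
      fun x => ∏ i : Fin (n+1), ENNReal.ofReal (x i ^ (e i.val)) with hF
    set Sset : Set (Fin (n+1) → ℝ) :=
      {x : Fin (n+1) → ℝ | StrictMono x ∧ ∀ i, x i ∈ Set.Ioo 0 c} with hS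
    have hFmeas : Measurable F := mzv_measurable_monomial (n+1) e
    have hGmeas : Measurable (Sset.indicator F) :=
      hFmeas.indicator (mzv_measurableSet_simplex (n+1) c)
    -- step 1: indicator
    rw [← lintegral_indicator (mzv_measurableSet_simplex (n+1) c)]
    -- step 2: measure preserving map
    set P := MeasurableEquiv.piFinSuccAbove (fun _ : Fin (n+1) => ℝ) (Fin.last n) with hP
    have hMP := measurePreserving_piFinSuccAbove (fun _ : Fin (n+1) => (volume : Measure ℝ)) (Fin.last n)
    have hcomp := hMP.lintegral_comp (f := fun p => Sset.indicator F (P.symm p))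
      (hGmeas.comp P.symm.measurable)
    replace hcomp : ∫⁻ a, Sset.indicator F a ∂(Measure.pi fun _ => volume)
        = ∫⁻ b, Sset.indicator F (P.symm b) ∂((volume : Measure ℝ).prod (Measure.pi fun _ => volume)) :=
      (lintegral_congr fun a => congrArg (Sset.indicator F) (P.symm_apply_apply a).symm).trans hcomp
    refine Eq.trans hcomp ?_
    -- step 3: Fubini
    rw [MeasureTheory.lintegral_prod (fun b => Sset.indicator F (P.symm b)) ((hGmeas.comp P.symm.measurable).aemeasurable)]
    -- the symm formula
    have hsymm : ∀ (t : ℝ) (y : Fin n → ℝ), P.symm (t, y) = Fin.snoc y t := by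
      intro t y
      rw [hP]
      rw [MeasurableEquiv.piFinSuccAbove_symm_apply]
      simp [Fin.insertNthEquiv, Fin.insertNth_last']
    -- inner integral
    have hinner : ∀ t : ℝ, (∫⁻ y : Fin n → ℝ, Sset.indicator F (P.symm (t, y)))
        = Set.indicator (Set.Ioo 0 c)
            (fun t => ENNReal.ofReal (t ^ a) * C) t := by
      intro t
      by_cases ht : t ∈ Set.Ioo (0:ℝ) c
      · rw [Set.indicator_of_mem ht]
        have hrw : ∀ y : Fin n → ℝ, Sset.indicator F (P.symm (t, y))
            = ENNReal.ofReal (t ^ (e n)) *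
              Set.indicator {y' : Fin n → ℝ | StrictMono y' ∧ ∀ i, y' i ∈ Set.Ioo 0 t}
                (fun y' => ∏ i : Fin n, ENNReal.ofReal (y' i ^ (e i.val))) y := by
          intro y
          rw [hsymm]
          by_cases hy : y ∈ {y' : Fin n → ℝ | StrictMono y' ∧ ∀ i, y' i ∈ Set.Ioo 0 t}
          · have hmem : (Fin.snoc y t : Fin (n+1) → ℝ) ∈ Sset := by
              rw [hS, Set.mem_setOf_eq]
              exact (mzv_snoc_mem n c t y).mpr ⟨ht, hy⟩
            rw [Set.indicator_of_mem hmem, Set.indicator_of_mem hy, hF]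
            beta_reduce
            rw [Fin.prod_univ_castSucc]
            simp only [Fin.snoc_castSucc, Fin.snoc_last, Fin.coe_castSucc, Fin.val_last]
            ring
          · have hmem : (Fin.snoc y t : Fin (n+1) → ℝ) ∉ Sset := by
              rw [hS, Set.mem_setOf_eq]
              intro hmem'
              exact hy ((mzv_snoc_mem n c t y).mp hmem').2
            rw [Set.indicator_of_notMem hmem, Set.indicator_of_notMem hy, mul_zero]
        simp only [hrw]
        rw [lintegral_const_mul _ ((mzv_measurable_monomial n e).indicator
          (mzv_measurableSet_simplex n t))]
        rw [lintegral_indicator (mzv_measurableSet_simplex n t)]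
        rw [ih (fun i hi => hB i (Nat.lt_succ_of_lt hi)) t ht.1]
        -- combine powers of t
        rw [← mul_assoc, ← ENNReal.ofReal_mul (zpow_nonneg (le_of_lt ht.1) _)]
        congr 2
        have ht0 : t ≠ 0 := ne_of_gt ht.1
        have h1 : t ^ (e n) * t ^ (A.toNat) = t ^ a := by
          have h2 : (A.toNat : ℤ) = A := Int.toNat_of_nonneg hA0
          have : t ^ (e n) * t ^ (A.toNat) = t ^ (e n) * t ^ ((A.toNat : ℤ)) := by
            rw [zpow_natCast]
          rw [this, ← zpow_add₀ ht0, h2]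
          rw [← haz, zpow_natCast]
        rw [h1]
      · rw [Set.indicator_of_notMem ht]
        have hrw : ∀ y : Fin n → ℝ, Sset.indicator F (P.symm (t, y)) = 0 := by
          intro y
          rw [hsymm]
          apply Set.indicator_of_notMem
          rw [hS, Set.mem_setOf_eq]
          intro hmem'
          exact ht ((mzv_snoc_mem n c t y).mp hmem').1
        simp only [hrw]
        simp
    refine Eq.trans (lintegral_congr fun t : ℝ => hinner t) ?_
    rw [lintegral_indicator measurableSet_Ioo]
    rw [lintegral_mul_const (f := fun t : ℝ => ENNReal.ofReal (t ^ a)) C ((measurable_id.pow_const a).ennreal_ofReal)]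
    rw [mzv_lintegral_pow a c hc]
    -- final bookkeeping
    rw [Fin.prod_univ_castSucc]
    have hlast : ((Fin.last n).val : ℤ) + 1 + ∑ l ∈ range ((Fin.last n).val + 1), e l
        = (a : ℤ) + 1 := by
      rw [Fin.val_last, haz, hA, Finset.sum_range_succ]; ring
    have htopow : (((n+1 : ℕ) : ℤ) + ∑ l ∈ range (n+1), e l).toNat = a + 1 := by
      have h3 : ((n+1:ℕ) : ℤ) + ∑ l ∈ range (n+1), e l = (a:ℤ) + 1 := by
        push_cast [haz, hA, Finset.sum_range_succ]; ring
      rw [h3]; omega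
    rw [htopow, hlast]
    have h4 : (((a:ℤ) + 1 : ℤ) : ℝ) = (a:ℝ) + 1 := by push_cast; ring
    rw [h4]
    have h5 : (∏ i : Fin n,
        (ENNReal.ofReal ((((i.castSucc.val : ℤ) + 1 + ∑ l ∈ range (i.castSucc.val+1), e l : ℤ)) : ℝ))⁻¹) = C := by
      rw [hC]
      congr 1
    rw [h5]
    ring


section Helpers

lemma mzv_sum_Iio_val {M : Type*} [AddCommMonoid M] {q : ℕ} (f : ℕ → M) (i : Fin q) :
    ∑ l ∈ Finset.Iio i, f l.val = ∑ l ∈ Finset.range i.val, f l := by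
  have h := Finset.sum_map (Finset.Iio i) Fin.valEmbedding f
  rw [Fin.map_valEmbedding_Iio] at h
  simp only [Fin.valEmbedding_apply] at h
  rw [← h, Nat.Iio_eq_range]

end Helpers

/-- **Kontsevich.** Let `k₁, …, k_d` (here `k : Fin (d+1) → ℕ`, so
the depth is `d+1 ≥ 1`) be positive integers with the last one `> 1`, and set
`n = k₁ + ⋯ + k_d`.  The multiple zeta value
`ζ(k₁,…,k_d) = ∑_{0<n₁<⋯<n_d} n₁^{-k₁}⋯n_d^{-k_d}` equals the iterated integral
over the simplex `0 < x₁ < ⋯ < x_n < 1` of `∏ ω_i(x_i)`, where `ω_i(x) = 1/(1-x)`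
if `i` is of the form `k₁ + ⋯ + k_j + 1` for some `0 ≤ j ≤ d-1` (i.e. `i-1` is a
partial sum of the weights) and `ω_i(x) = 1/x` otherwise. -/
theorem multiple_zeta_value_eq_iterated_integral (d : ℕ) (k : Fin (d + 1) → ℕ)
    (hk : ∀ i, 0 < k i) (hlast : 1 < k (Fin.last d)) :
    (∑' n : {g : Fin (d + 1) → ℕ // StrictMono g ∧ ∀ i, 0 < g i},
        ∏ i, (((n : Fin (d + 1) → ℕ) i : ℝ) ^ (k i))⁻¹)
      = ∫ x in {x : Fin (∑ j, k j) → ℝ | StrictMono x ∧ ∀ i, x i ∈ Set.Ioo (0 : ℝ) 1},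
          ∏ i : Fin (∑ j, k j), (if ∃ m : Fin (d + 1), (i : ℕ) = ∑ j ∈ Finset.Iio m, k j
                then (1 - x i)⁻¹ else (x i)⁻¹) := by
  have hn : (∑ j, k j) = mzvS d k (d+1) := by
    rw [mzvS, ← Fin.sum_univ_eq_sum_range (fun l => mzvK d k l) (d+1)]
    exact Finset.sum_congr rfl (fun j _ => (mzvK_eq j).symm)
  have hIio : ∀ mi : Fin (d+1), ∑ j' ∈ Finset.Iio mi, k j' = mzvS d k mi.val := by
    intro mi
    rw [mzvS, ← mzv_sum_Iio_val (mzvK d k) mi]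
    exact Finset.sum_congr rfl (fun j' _ => (mzvK_eq j').symm)
  have hcond : ∀ iv : ℕ, (∃ mi : Fin (d+1), iv = ∑ j' ∈ Finset.Iio mi, k j')
      ↔ (∃ j' : Fin (d+1), iv = mzvS d k j'.val) :=
    fun iv => exists_congr (fun mi => by rw [hIio mi])
  set T : (Fin (d+1) → ℕ) → ENNReal :=
    fun m => ∏ j : Fin (d+1), ((((mzvN d m j.val : ℕ) : ENNReal)) ^ (k j))⁻¹ with hT
  have hTne : ∀ m, T m ≠ ⊤ := by
    intro m
    rw [hT]
    refine (ENNReal.prod_lt_top ?_).ne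
    intro j _
    rw [ENNReal.inv_lt_top]
    exact ENNReal.pow_pos (by exact_mod_cast mzvN_pos m j.val) _
  -- the left-hand side
  have hL : (∑' n : {g : Fin (d + 1) → ℕ // StrictMono g ∧ ∀ i, 0 < g i},
        ∏ i, (((n : Fin (d + 1) → ℕ) i : ℝ) ^ (k i))⁻¹)
      = (∑' m : Fin (d+1) → ℕ, T m).toReal := by
    rw [← Equiv.tsum_eq (mzvPhi d) (fun nn : {g : Fin (d + 1) → ℕ // StrictMono g ∧ ∀ i, 0 < g i} =>
      ∏ i, (((nn : Fin (d + 1) → ℕ) i : ℝ) ^ (k i))⁻¹)]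
    rw [ENNReal.tsum_toReal_eq hTne]
    apply tsum_congr
    intro m
    rw [hT]
    rw [ENNReal.toReal_prod]
    apply Finset.prod_congr rfl
    intro j _
    simp only [ENNReal.toReal_inv, ENNReal.toReal_pow, ENNReal.toReal_natCast]
    rfl
  rw [hL]
  -- measurability and positivity
  have hSmeas := mzv_measurableSet_simplex (∑ j, k j) 1
  have hfactor_nonneg : ∀ x : Fin (∑ j, k j) → ℝ,
      x ∈ {x : Fin (∑ j, k j) → ℝ | StrictMono x ∧ ∀ i, x i ∈ Set.Ioo (0:ℝ) 1} →
      ∀ i : Fin (∑ j, k j), 0 ≤ (if ∃ m : Fin (d + 1), (i : ℕ) = ∑ j ∈ Finset.Iio m, k j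
        then (1 - x i)⁻¹ else (x i)⁻¹) := by
    intro x hx i
    rcases hx with ⟨-, hmem⟩
    by_cases hc : ∃ m : Fin (d + 1), (i : ℕ) = ∑ j ∈ Finset.Iio m, k j
    · rw [if_pos hc]
      have := (hmem i).2
      exact inv_nonneg.mpr (by linarith)
    · rw [if_neg hc]
      exact inv_nonneg.mpr (le_of_lt (hmem i).1)
  have hfmeas : Measurable (fun x : Fin (∑ j, k j) → ℝ =>
      ∏ i : Fin (∑ j, k j), (if ∃ m : Fin (d + 1), (i : ℕ) = ∑ j ∈ Finset.Iio m, k j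
        then (1 - x i)⁻¹ else (x i)⁻¹)) := by
    apply Finset.measurable_prod
    intro i _
    by_cases hc : ∃ m : Fin (d + 1), (i : ℕ) = ∑ j ∈ Finset.Iio m, k j
    · simp only [if_pos hc]
      exact (measurable_const.sub (measurable_pi_apply i)).inv
    · simp only [if_neg hc]
      exact (measurable_pi_apply i).inv
  rw [MeasureTheory.integral_eq_lintegral_of_nonneg_ae ?hnn ?hsm]
  case hnn =>
    filter_upwards [self_mem_ae_restrict hSmeas] with x hx
    exact Finset.prod_nonneg (fun i _ => hfactor_nonneg x hx i)
  case hsm => exact hfmeas.aestronglyMeasurable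
  congr 1
  -- positions inside the simplex
  have hposlt : ∀ (j : Fin (d+1)) (r : ℕ), r < mzvK d k j.val → mzvS d k j.val + r < (∑ j, k j) := by
    intro j r hr; rw [hn]; exact mzv_pos_lt hk j.isLt hr
  -- the expansion into monomials
  have hexp : ∀ x ∈ {x : Fin (∑ j, k j) → ℝ | StrictMono x ∧ ∀ i, x i ∈ Set.Ioo (0:ℝ) 1},
      ENNReal.ofReal (∏ i : Fin (∑ j, k j), (if ∃ m : Fin (d + 1), (i : ℕ) = ∑ j ∈ Finset.Iio m, k j
        then (1 - x i)⁻¹ else (x i)⁻¹))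
      = ∑' m : Fin (d+1) → ℕ, ∏ i : Fin (∑ j, k j), ENNReal.ofReal (x i ^ (mzvE d k m i.val)) := by
    intro x hx
    have hmem : ∀ i, x i ∈ Set.Ioo (0:ℝ) 1 := hx.2
    set ι : Fin (d+1) → Fin (∑ j, k j) := fun j =>
      ⟨mzvS d k j.val, by
        have := hposlt j 0 (by rw [mzvK_eq]; exact hk j); omega⟩ with hι
    set g : ℕ → ENNReal := fun iv =>
      if h : iv < (∑ j, k j) then
        ENNReal.ofReal (if ∃ mi : Fin (d + 1), iv = ∑ j' ∈ Finset.Iio mi, k j'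
          then (1 - x ⟨iv, h⟩)⁻¹ else (x ⟨iv, h⟩)⁻¹)
      else 1 with hg
    have hg_start : ∀ j : Fin (d+1), g (mzvS d k j.val)
        = ∑' (mj : ℕ), ENNReal.ofReal (x (ι j) ^ mj) := by
      intro j
      rw [hg]
      simp only
      rw [dif_pos (ι j).isLt, if_pos ⟨j, (hIio j).symm⟩]
      exact mzv_geom (x (ι j)) (hmem (ι j))
    have hg_non : ∀ (j : Fin (d+1)) (r : ℕ), 0 < r → ∀ hr : r < mzvK d k j.val,
        g (mzvS d k j.val + r)
          = ENNReal.ofReal ((x ⟨mzvS d k j.val + r, hposlt j r hr⟩)⁻¹) := by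
      intro j r hr0 hr
      rw [hg]
      simp only
      rw [dif_pos (hposlt j r hr), if_neg ?_]
      intro hcontra
      exact mzv_no_start hk j.isLt hr0 hr ((hcond _).mp hcontra)
    have hblock : ∀ j : Fin (d+1), ∏ r ∈ range (mzvK d k j.val), g (mzvS d k j.val + r)
        = ∑' (mj : ℕ), (∏ r' ∈ range (mzvK d k j.val - 1), g (mzvS d k j.val + (r'+1)))
            * ENNReal.ofReal (x (ι j) ^ mj) := by
      intro j
      have hKpos : 0 < mzvK d k j.val := by rw [mzvK_eq]; exact hk j
      obtain ⟨kj, hkj⟩ : ∃ kj, mzvK d k j.val = kj + 1 := ⟨mzvK d k j.val - 1, by omega⟩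
      rw [hkj, Finset.prod_range_succ', add_zero, hg_start j, ENNReal.tsum_mul_left]
      norm_num
    -- for each multi-index, the block product is the monomial
    have hclaim3 : ∀ m : Fin (d+1) → ℕ,
        (∏ jj : Fin (d+1), (∏ r' ∈ range (mzvK d k jj.val - 1), g (mzvS d k jj.val + (r'+1)))
          * ENNReal.ofReal (x (ι jj) ^ (m jj)))
        = ∏ i : Fin (∑ j, k j), ENNReal.ofReal (x i ^ (mzvE d k m i.val)) := by
      intro m
      set g2 : ℕ → ENNReal := fun iv =>
        if h : iv < (∑ j, k j) then ENNReal.ofReal (x ⟨iv, h⟩ ^ (mzvE d k m iv)) else 1 with hg2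
      have hblockeq : ∀ jj : Fin (d+1),
          ∏ r ∈ range (mzvK d k jj.val), g2 (mzvS d k jj.val + r)
            = (∏ r' ∈ range (mzvK d k jj.val - 1), g (mzvS d k jj.val + (r'+1)))
              * ENNReal.ofReal (x (ι jj) ^ (m jj)) := by
        intro jj
        have hKpos : 0 < mzvK d k jj.val := by rw [mzvK_eq]; exact hk jj
        obtain ⟨kj, hkj⟩ : ∃ kj, mzvK d k jj.val = kj + 1 := ⟨mzvK d k jj.val - 1, by omega⟩
        rw [hkj, Finset.prod_range_succ', add_zero]
        congr 1
        · have hrange : kj + 1 - 1 = kj := by omega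
          rw [hrange]
          apply Finset.prod_congr rfl
          intro r' hr'
          have hr'lt : r' + 1 < mzvK d k jj.val := by
            rw [hkj]; have := Finset.mem_range.mp hr'; omega
          rw [hg2]
          simp only
          rw [dif_pos (hposlt jj (r'+1) hr'lt)]
          rw [mzvE_nonstart hk m jj.isLt (by omega) hr'lt]
          rw [hg_non jj (r'+1) (by omega) hr'lt]
          rw [zpow_neg_one]
        · rw [hg2]
          simp only
          rw [dif_pos (ι jj).isLt]
          rw [mzvE_start hk m jj, zpow_natCast]
      calc (∏ jj : Fin (d+1), (∏ r' ∈ range (mzvK d k jj.val - 1), g (mzvS d k jj.val + (r'+1)))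
          * ENNReal.ofReal (x (ι jj) ^ (m jj)))
          = ∏ jj : Fin (d+1), ∏ r ∈ range (mzvK d k jj.val), g2 (mzvS d k jj.val + r) :=
            (Finset.prod_congr rfl (fun jj _ => hblockeq jj)).symm
        _ = ∏ j' ∈ range (d+1), ∏ r ∈ range (mzvK d k j'), g2 (mzvS d k j' + r) :=
            Fin.prod_univ_eq_prod_range (fun j' => ∏ r ∈ range (mzvK d k j'), g2 (mzvS d k j' + r)) (d+1)
        _ = ∏ iv ∈ range (∑ j, k j), g2 iv := by
            rw [hn]; exact (mzv_prod_blocks (mzvK d k) g2 (d+1)).symm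
        _ = ∏ i : Fin (∑ j, k j), ENNReal.ofReal (x i ^ (mzvE d k m i.val)) := by
            rw [← Fin.prod_univ_eq_prod_range g2]
            apply Finset.prod_congr rfl
            intro i _
            simp only [hg2, dif_pos i.isLt, Fin.eta]
    calc ENNReal.ofReal (∏ i : Fin (∑ j, k j), (if ∃ m : Fin (d + 1), (i : ℕ) = ∑ j ∈ Finset.Iio m, k j
        then (1 - x i)⁻¹ else (x i)⁻¹))
        = ∏ i : Fin (∑ j, k j), ENNReal.ofReal (if ∃ m : Fin (d + 1), (i : ℕ) = ∑ j ∈ Finset.Iio m, k j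
            then (1 - x i)⁻¹ else (x i)⁻¹) :=
          ENNReal.ofReal_prod_of_nonneg (fun i _ => hfactor_nonneg x hx i)
      _ = ∏ iv ∈ range (∑ j, k j), g iv := by
          rw [← Fin.prod_univ_eq_prod_range g]
          apply Finset.prod_congr rfl
          intro i _
          simp only [hg, dif_pos i.isLt, Fin.eta]
      _ = ∏ j' ∈ range (d+1), ∏ r ∈ range (mzvK d k j'), g (mzvS d k j' + r) := by
          rw [hn]; exact mzv_prod_blocks (mzvK d k) g (d+1)
      _ = ∏ jj : Fin (d+1), ∏ r ∈ range (mzvK d k jj.val), g (mzvS d k jj.val + r) :=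
          (Fin.prod_univ_eq_prod_range (fun j' => ∏ r ∈ range (mzvK d k j'), g (mzvS d k j' + r)) (d+1)).symm
      _ = ∏ jj : Fin (d+1), ∑' (mj : ℕ), (∏ r' ∈ range (mzvK d k jj.val - 1), g (mzvS d k jj.val + (r'+1)))
            * ENNReal.ofReal (x (ι jj) ^ mj) :=
          Finset.prod_congr rfl (fun jj _ => hblock jj)
      _ = ∑' m : Fin (d+1) → ℕ, ∏ jj : Fin (d+1), (∏ r' ∈ range (mzvK d k jj.val - 1), g (mzvS d k jj.val + (r'+1)))
            * ENNReal.ofReal (x (ι jj) ^ (m jj)) :=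
          mzv_prod_tsum (d+1) _
      _ = ∑' m : Fin (d+1) → ℕ, ∏ i : Fin (∑ j, k j), ENNReal.ofReal (x i ^ (mzvE d k m i.val)) :=
          tsum_congr (fun m => hclaim3 m)
  rw [setLIntegral_congr_fun_ae hSmeas (ae_of_all _ hexp)]
  rw [lintegral_tsum (fun m => (mzv_measurable_monomial _ (mzvE d k m)).aemeasurable)]
  apply tsum_congr
  intro m
  have hB : ∀ i < (∑ j, k j), 0 < (i + 1 : ℤ) + ∑ l ∈ range (i+1), mzvE d k m l := by
    intro i hi
    rw [hn] at hi
    obtain ⟨j, hj, r, hr, rfl⟩ := mzv_decomp hk (d+1) i hi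
    rw [show ((mzvS d k j + r : ℕ) : ℤ) + 1 + ∑ l ∈ range (mzvS d k j + r + 1), mzvE d k m l
      = (mzvN d m j : ℤ) from mzv_partial_sum hk m hj hr]
    exact_mod_cast mzvN_pos m j
  rw [mzv_monomial (∑ j, k j) (mzvE d k m) hB 1 one_pos]
  rw [one_pow, ENNReal.ofReal_one, one_mul]
  -- final product computation
  rw [hT]
  set gB : ℕ → ENNReal := fun iv =>
    (ENNReal.ofReal ((((iv : ℤ) + 1 + ∑ l ∈ range (iv+1), mzvE d k m l : ℤ)) : ℝ))⁻¹ with hgB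
  calc (∏ j : Fin (d+1), ((((mzvN d m j.val : ℕ) : ENNReal)) ^ (k j))⁻¹)
      = ∏ j' ∈ range (d+1), (((mzvN d m j' : ℕ) : ENNReal))⁻¹ ^ (mzvK d k j') := by
        rw [← Fin.prod_univ_eq_prod_range (fun j' => (((mzvN d m j' : ℕ) : ENNReal))⁻¹ ^ (mzvK d k j')) (d+1)]
        apply Finset.prod_congr rfl
        intro j _
        rw [mzvK_eq]
        exact ENNReal.inv_pow
    _ = ∏ j' ∈ range (d+1), ∏ r ∈ range (mzvK d k j'), gB (mzvS d k j' + r) := by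
        apply Finset.prod_congr rfl
        intro j' hj'
        have hj'lt : j' < d+1 := Finset.mem_range.mp hj'
        have hfac : ∀ r ∈ range (mzvK d k j'), gB (mzvS d k j' + r)
            = (((mzvN d m j' : ℕ) : ENNReal))⁻¹ := by
          intro r hr
          rw [hgB]
          simp only
          rw [show ((mzvS d k j' + r : ℕ) : ℤ) + 1 + ∑ l ∈ range (mzvS d k j' + r + 1), mzvE d k m l
            = (mzvN d m j' : ℤ) from mzv_partial_sum hk m hj'lt (Finset.mem_range.mp hr)]
          rw [show (((mzvN d m j' : ℤ)) : ℝ) = ((mzvN d m j' : ℕ) : ℝ) by push_cast; ring]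
          rw [ENNReal.ofReal_natCast]
        rw [Finset.prod_congr rfl hfac, Finset.prod_const, Finset.card_range]
    _ = ∏ iv ∈ range (∑ j, k j), gB iv := by
        rw [hn]; exact (mzv_prod_blocks (mzvK d k) gB (d+1)).symm
    _ = ∏ i : Fin (∑ j, k j), (ENNReal.ofReal ((((i.val : ℤ) + 1 + ∑ l ∈ range (i.val+1), mzvE d k m l : ℤ)) : ℝ))⁻¹ := by
        exact (Fin.prod_univ_eq_prod_range gB _).symm
end
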